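/- Every d-dimensional pseudomanifold (d ≥ 1) with exactly d + 3 vertices is isomorphic to the join S^c_{c+2} * S^{d-c-1}_{d-c+1} of two standard spheres for some c with 0 ≤ c < d; in particular, it is a polytopal sphere. -/

import Mathlib

open Geometry

namespace MinTri

/-- The ambient Euclidean space `ℝ^N`. -/
abbrev Spc (N : ℕ) : Type := Fin N → ℝ

variable {m n N : ℕ}

/-- `fcount K i` is the number `f_i(K)` of `i`-dimensional simplices of `K`. -/
noncomputable def fcount (K : SimplicialComplex ℝ (Spc N)) (i : ℕ) : ℕ :=
  {s ∈ K.faces | s.card = i + 1}.ncard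

/-- The Euler characteristic `χ(K) = ∑_{i=0}^{d} (-1)^i f_i(K)` of a `d`-dimensional complex. -/
noncomputable def eulerChar (K : SimplicialComplex ℝ (Spc N)) (d : ℕ) : ℤ :=
  ∑ i ∈ Finset.range (d + 1), (-1 : ℤ) ^ i * fcount K i

/-- `f_{i-1}(K)` with the convention `f_{-1} = 1` (so `fcount' K 0 = 1`). -/
noncomputable def fcount' (K : SimplicialComplex ℝ (Spc N)) (i : ℕ) : ℤ :=
  if i = 0 then 1 else (fcount K (i - 1) : ℤ)

/-- The `h`-vector: `h_j(K) = ∑_{i=-1}^{j-1} (-1)^{j-i-1} C(d-i, j-i-1) f_i(K)`,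
reindexed as a sum over `i` from `0` to `j` with `fcount'` (where `fcount' K i = f_{i-1}(K)`). -/
noncomputable def hvec (K : SimplicialComplex ℝ (Spc N)) (d j : ℕ) : ℤ :=
  ∑ i ∈ Finset.range (j + 1),
    (-1 : ℤ) ^ (j - i) * ((d + 1 - i).choose (j - i) : ℤ) * fcount' K i

/-- An isomorphism between two simplicial complexes: an injection on vertices carrying the
faces of one complex exactly onto the faces of the other. -/
def IsIso (K : SimplicialComplex ℝ (Spc m)) (L : SimplicialComplex ℝ (Spc n)) : Prop :=
  ∃ f : Spc m → Spc n, Set.InjOn f K.vertices ∧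
    (∀ s ∈ K.faces, s.image f ∈ L.faces) ∧
    (∀ t ∈ L.faces, ∃ s ∈ K.faces, s.image f = t)

/-- `L` is a subdivision of `K`: same underlying polyhedron and every simplex of `L` is
contained in a simplex of `K`. -/
def IsSubdivisionOf (L K : SimplicialComplex ℝ (Spc N)) : Prop :=
  L.space = K.space ∧
    ∀ s ∈ L.faces, ∃ t ∈ K.faces,
      convexHull ℝ (s : Set (Spc N)) ⊆ convexHull ℝ (t : Set (Spc N))

/-- Two complexes are combinatorially equivalent if they have isomorphic subdivisions. -/
def CombEquiv (K : SimplicialComplex ℝ (Spc m)) (L : SimplicialComplex ℝ (Spc n)) : Prop :=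
  ∃ (K' : SimplicialComplex ℝ (Spc m)) (L' : SimplicialComplex ℝ (Spc n)),
    IsSubdivisionOf K' K ∧ IsSubdivisionOf L' L ∧ IsIso K' L'

/-- `K` is the boundary complex of a geometric `(d+1)`-simplex: its faces are exactly the proper
nonempty subsets of a set `s` of `d+2` affinely independent points (the standard `d`-sphere). -/
def IsStandardSphere (d : ℕ) (K : SimplicialComplex ℝ (Spc N)) : Prop :=
  ∃ s : Finset (Spc N), s.card = d + 2 ∧
    AffineIndependent ℝ ((↑) : s → Spc N) ∧
    K.faces = {t | t ⊆ s ∧ t ≠ ∅ ∧ t ≠ s}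

/-- A combinatorial `d`-sphere: a complex combinatorially equivalent to the boundary complex of
the `(d+1)`-simplex. -/
def IsCombSphere (d : ℕ) (K : SimplicialComplex ℝ (Spc N)) : Prop :=
  ∃ L : SimplicialComplex ℝ (Spc (d + 2)), IsStandardSphere d L ∧ CombEquiv K L

/-- The link of a simplex `σ` in `K`: all faces disjoint from `σ` whose union with `σ`
is again a face. -/
noncomputable def linkOf (K : SimplicialComplex ℝ (Spc N)) (σ : Finset (Spc N)) :
    SimplicialComplex ℝ (Spc N) where
  faces := {s | s ∈ K.faces ∧ Disjoint s σ ∧ s ∪ σ ∈ K.faces}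
  isRelLowerSet_faces := by
    intro s hs
    refine ⟨K.nonempty_of_mem_faces hs.1, fun t hts ht => ?_⟩
    exact ⟨K.down_closed hs.1 hts ht, Finset.disjoint_of_subset_left hts hs.2.1,
      K.down_closed hs.2.2 (Finset.union_subset_union_left hts)
        (Finset.Nonempty.mono Finset.subset_union_left ht)⟩
  indep h := K.indep h.1
  inter_subset_convexHull hs ht := K.inter_subset_convexHull hs.1 ht.1

/-- The link of a vertex. -/
noncomputable def link (K : SimplicialComplex ℝ (Spc N)) (v : Spc N) :
    SimplicialComplex ℝ (Spc N) :=
  linkOf K {v}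

/-- A combinatorial `d`-manifold: a nonempty finite simplicial complex in which the link of
every vertex is a combinatorial `(d-1)`-sphere. -/
def IsCombManifold (d : ℕ) (K : SimplicialComplex ℝ (Spc N)) : Prop :=
  K.faces.Finite ∧ K.faces.Nonempty ∧
    ∀ v ∈ K.vertices, IsCombSphere (d - 1) (link K v)

/-- `K` is pure of dimension `d`: every face has at most `d+1` vertices and is contained in a
face with exactly `d+1` vertices. -/
def IsPure (d : ℕ) (K : SimplicialComplex ℝ (Spc N)) : Prop :=
  (∀ s ∈ K.faces, s.card ≤ d + 1) ∧
    ∀ s ∈ K.faces, ∃ t ∈ K.faces, t.card = d + 1 ∧ s ⊆ t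

/-- A `d`-pseudomanifold: a nonempty pure `d`-dimensional complex in which every `(d-1)`-simplex
lies in exactly two facets, and any two facets are connected by a chain of facets, consecutive
ones meeting in a `(d-1)`-simplex. -/
def IsPseudomanifold (d : ℕ) (K : SimplicialComplex ℝ (Spc N)) : Prop :=
  K.faces.Nonempty ∧ IsPure d K ∧
    (∀ s ∈ K.faces, s.card = d →
      {t | t ∈ K.faces ∧ t.card = d + 1 ∧ s ⊆ t}.ncard = 2) ∧
    ∀ s ∈ K.faces, ∀ t ∈ K.faces, s.card = d + 1 → t.card = d + 1 →
      ∃ (k : ℕ) (c : Fin (k + 1) → Finset (Spc N)), c 0 = s ∧ c (Fin.last k) = t ∧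
        (∀ i, c i ∈ K.faces ∧ (c i).card = d + 1) ∧
        ∀ i : Fin k, (c i.castSucc ∩ c i.succ).card = d

/-- Connectedness of a complex: any two vertices are joined by a path of edges. -/
def ComplexConnected (K : SimplicialComplex ℝ (Spc N)) : Prop :=
  ∀ u ∈ K.vertices, ∀ w ∈ K.vertices,
    ∃ (k : ℕ) (p : Fin (k + 1) → Spc N), p 0 = u ∧ p (Fin.last k) = w ∧
      ∀ i : Fin k, ({p i.castSucc, p i.succ} : Finset (Spc N)) ∈ K.faces

/-- A normal `d`-pseudomanifold: a `d`-pseudomanifold in which the link of every simplex of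
dimension at most `d - 2` is connected. -/
def IsNormalPseudomanifold (d : ℕ) (K : SimplicialComplex ℝ (Spc N)) : Prop :=
  IsPseudomanifold d K ∧
    ∀ σ ∈ K.faces, σ.card + 1 ≤ d → ComplexConnected (linkOf K σ)

/-- `K` is `k`-neighbourly: every `k` vertices span a `(k-1)`-face. -/
def IsNeighbourly (k : ℕ) (K : SimplicialComplex ℝ (Spc N)) : Prop :=
  ∀ s : Finset (Spc N), (s : Set (Spc N)) ⊆ K.vertices → s.card = k → s ∈ K.faces

/-- `K'` is obtained from `K` by starring the vertex `a` in the facet `σ`: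
`a` is an interior point of `σ` and the facet `σ` is replaced by the cones from `a`
over the proper faces of `σ`. -/
def IsStarredFacet (K K' : SimplicialComplex ℝ (Spc N)) (σ : Finset (Spc N)) (a : Spc N) :
    Prop :=
  σ ∈ K.facets ∧ a ∈ convexHull ℝ (σ : Set (Spc N)) ∧
    (∀ τ : Finset (Spc N), τ ⊂ σ → a ∉ convexHull ℝ (τ : Set (Spc N))) ∧
    K'.faces = (K.faces \ {σ}) ∪
      {s | ∃ τ : Finset (Spc N), τ ⊆ σ ∧ τ ≠ σ ∧ s = insert a τ}

/-- A geometric witness that a complex is a stacked `d`-sphere: a chain of complexes starting at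
the boundary complex of a `(d+1)`-simplex, each obtained from the previous one by starring a new
vertex in a facet. -/
def IsStackedSphereSeq (d : ℕ) (K : SimplicialComplex ℝ (Spc N)) : Prop :=
  ∃ (k : ℕ) (c : Fin (k + 1) → SimplicialComplex ℝ (Spc N)),
    IsStandardSphere d (c 0) ∧ c (Fin.last k) = K ∧
    ∀ i : Fin k, ∃ σ a, IsStarredFacet (c i.castSucc) (c i.succ) σ a

/-- A stacked `d`-sphere (up to isomorphism). -/
def IsStackedSphere (d : ℕ) (K : SimplicialComplex ℝ (Spc m)) : Prop :=
  ∃ (N : ℕ) (L : SimplicialComplex ℝ (Spc N)), IsStackedSphereSeq d L ∧ IsIso K L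

/-- `L` is the boundary complex of the polytope `conv V`: the faces of `L` are simplices
spanning exactly the proper (exposed) faces of the polytope; in particular the polytope is
simplicial. -/
def IsBoundaryComplexOfPolytope (L : SimplicialComplex ℝ (Spc N)) (V : Finset (Spc N)) :
    Prop :=
  (∀ s ∈ L.faces, (s : Set (Spc N)) ⊆ (V : Set (Spc N)) ∧
      IsExposed ℝ (convexHull ℝ (V : Set (Spc N))) (convexHull ℝ (s : Set (Spc N))) ∧
      convexHull ℝ (s : Set (Spc N)) ≠ convexHull ℝ (V : Set (Spc N))) ∧
    ∀ F : Set (Spc N), F.Nonempty → IsExposed ℝ (convexHull ℝ (V : Set (Spc N))) F →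
      F ≠ convexHull ℝ (V : Set (Spc N)) → ∃ s ∈ L.faces, F = convexHull ℝ (s : Set (Spc N))

/-- A polytopal `d`-sphere: a complex isomorphic to the boundary complex of a simplicial
`(d+1)`-polytope (a full-dimensional polytope in `ℝ^{d+1}`). -/
def IsPolytopalSphere (d : ℕ) (K : SimplicialComplex ℝ (Spc m)) : Prop :=
  ∃ (V : Finset (Spc (d + 1))) (L : SimplicialComplex ℝ (Spc (d + 1))),
    affineSpan ℝ (V : Set (Spc (d + 1))) = ⊤ ∧
    IsBoundaryComplexOfPolytope L V ∧ IsIso K L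


section Aux

theorem part1 {N d : ℕ} (hd : 1 ≤ d) (M : SimplicialComplex ℝ (Spc N))
    (hne : M.faces.Nonempty)
    (hdim : ∀ s ∈ M.faces, s.card ≤ d + 1)
    (hpure : ∀ s ∈ M.faces, ∃ t ∈ M.faces, t.card = d + 1 ∧ s ⊆ t)
    (hridge : ∀ s ∈ M.faces, s.card = d →
      {t | t ∈ M.faces ∧ t.card = d + 1 ∧ s ⊆ t}.ncard = 2)
    (hn : M.vertices.ncard = d + 3) :
    ∃ c : ℕ, c < d ∧ ∃ s₁ s₂ : Finset (Spc N), Disjoint s₁ s₂ ∧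
      s₁.card = c + 2 ∧ s₂.card = d - c + 1 ∧
      M.faces = {t | t ≠ ∅ ∧ ∃ α β : Finset (Spc N),
        α ⊆ s₁ ∧ α ≠ s₁ ∧ β ⊆ s₂ ∧ β ≠ s₂ ∧ t = α ∪ β} := by
  classical
  have hfin : M.vertices.Finite := by
    by_contra h
    rw [Set.Infinite.ncard h] at hn; omega
  set V : Finset (Spc N) := hfin.toFinset with hVdef
  have hV : V.card = d + 3 := by
    rw [← hn]; exact (Set.ncard_eq_toFinset_card _ hfin).symm
  have hsubV : ∀ s ∈ M.faces, s ⊆ V := by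
    intro s hs x hx
    exact hfin.mem_toFinset.2 (M.down_closed hs (Finset.singleton_subset_iff.2 hx)
      (Finset.singleton_nonempty x))
  have hvmem : ∀ x ∈ V, ({x} : Finset (Spc N)) ∈ M.faces := fun x hx => hfin.mem_toFinset.1 hx
  set edg : Spc N → Spc N → Prop :=
    fun x y => x ∈ V ∧ y ∈ V ∧ x ≠ y ∧ V \ {x, y} ∈ M.faces with hedg
  have esymm : ∀ {x y}, edg x y → edg y x := by
    rintro x y ⟨h1, h2, h3, h4⟩
    exact ⟨h2, h1, h3.symm, by rwa [Finset.pair_comm]⟩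
  have hccard : ∀ {x y : Spc N}, x ∈ V → y ∈ V → x ≠ y → (V \ {x, y}).card = d + 1 := by
    intro x y hx hy hxy
    rw [Finset.card_sdiff_of_subset (by intro a ha; simp at ha; rcases ha with rfl | rfl <;> assumption),
      hV, Finset.card_pair hxy]
    omega
  have hfacet : ∀ s ∈ M.faces, s.card = d + 1 → ∃ x y, edg x y ∧ s = V \ {x, y} := by
    intro s hs hcard
    have hsV := hsubV s hs
    have h2 : (V \ s).card = 2 := by rw [Finset.card_sdiff_of_subset hsV, hV, hcard]; omega
    obtain ⟨x, y, hxy, hpair⟩ := Finset.card_eq_two.1 h2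
    have hx : x ∈ V := (Finset.mem_sdiff.1 (hpair ▸ Finset.mem_insert_self x {y})).1
    have hy : y ∈ V :=
      (Finset.mem_sdiff.1 (hpair ▸ Finset.mem_insert_of_mem (Finset.mem_singleton_self y))).1
    have hform : s = V \ {x, y} := by rw [← hpair, Finset.sdiff_sdiff_eq_self hsV]
    exact ⟨x, y, ⟨hx, hy, hxy, hform ▸ hs⟩, hform⟩
  -- the 3-set lemma
  have h3set : ∀ x y z : Spc N, x ∈ V → y ∈ V → z ∈ V → x ≠ y → x ≠ z → y ≠ z →
      edg x y → (edg x z ↔ ¬ edg y z) := by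
    intro x y z hx hy hz hxy hxz hyz hexy
    set σ : Finset (Spc N) := V \ {x, y, z} with hσ
    have hT : ({x, y, z} : Finset (Spc N)) ⊆ V := by
      intro a ha; simp only [Finset.mem_insert, Finset.mem_singleton] at ha
      rcases ha with rfl | rfl | rfl <;> assumption
    have hTcard : ({x, y, z} : Finset (Spc N)).card = 3 := by
      rw [Finset.card_insert_of_notMem (by simp [hxy, hxz]),
        Finset.card_insert_of_notMem (by simp [hyz]), Finset.card_singleton]
    have hσcard : σ.card = d := by rw [hσ, Finset.card_sdiff_of_subset hT, hV, hTcard]; omega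
    have hznotxy : z ∉ ({x, y} : Finset (Spc N)) := by
      simp only [Finset.mem_insert, Finset.mem_singleton]
      rintro (rfl | rfl); exacts [hxz rfl, hyz rfl]
    have hzins : insert z σ = V \ ({x, y} : Finset (Spc N)) := by
      ext a
      simp only [Finset.mem_insert, hσ, Finset.mem_sdiff, Finset.mem_singleton]
      constructor
      · rintro (rfl | ⟨h1, h2⟩)
        · exact ⟨hz, by rintro (rfl | rfl); exacts [hxz rfl, hyz rfl]⟩
        · exact ⟨h1, fun h => h2 (by rcases h with rfl | rfl; exacts [Or.inl rfl, Or.inr (Or.inl rfl)])⟩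
      · rintro ⟨h1, h2⟩
        by_cases haz : a = z
        · exact Or.inl haz
        · exact Or.inr ⟨h1, by rintro (rfl | rfl | rfl); exacts [h2 (Or.inl rfl), h2 (Or.inr rfl), haz rfl]⟩
    have hyins : insert y σ = V \ ({x, z} : Finset (Spc N)) := by
      ext a
      simp only [Finset.mem_insert, hσ, Finset.mem_sdiff, Finset.mem_singleton]
      constructor
      · rintro (rfl | ⟨h1, h2⟩)
        · exact ⟨hy, by rintro (rfl | rfl); exacts [hxy rfl, hyz rfl]⟩
        · exact ⟨h1, fun h => h2 (by rcases h with rfl | rfl; exacts [Or.inl rfl, Or.inr (Or.inr rfl)])⟩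
      · rintro ⟨h1, h2⟩
        by_cases hay : a = y
        · exact Or.inl hay
        · exact Or.inr ⟨h1, by rintro (rfl | rfl | rfl); exacts [h2 (Or.inl rfl), hay rfl, h2 (Or.inr rfl)]⟩
    have hxins : insert x σ = V \ ({y, z} : Finset (Spc N)) := by
      ext a
      simp only [Finset.mem_insert, hσ, Finset.mem_sdiff, Finset.mem_singleton]
      constructor
      · rintro (rfl | ⟨h1, h2⟩)
        · exact ⟨hx, by rintro (rfl | rfl); exacts [hxy rfl, hxz rfl]⟩
        · exact ⟨h1, fun h => h2 (by rcases h with rfl | rfl; exacts [Or.inr (Or.inl rfl), Or.inr (Or.inr rfl)])⟩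
      · rintro ⟨h1, h2⟩
        by_cases hax : a = x
        · exact Or.inl hax
        · exact Or.inr ⟨h1, by rintro (rfl | rfl | rfl); exacts [hax rfl, h2 (Or.inl rfl), h2 (Or.inr rfl)]⟩
    have hσsub : σ ⊆ V \ ({x, y} : Finset (Spc N)) := by
      rw [← hzins]; exact Finset.subset_insert _ _
    have hσne : σ ≠ ∅ := by
      intro h; rw [h, Finset.card_empty] at hσcard; omega
    have hσface : σ ∈ M.faces := M.down_closed hexy.2.2.2 hσsub (Finset.nonempty_iff_ne_empty.2 hσne)
    have key := hridge σ hσface hσcard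
    -- the candidate facets
    have hxnot : x ∉ σ := by simp [hσ]
    have hynot : y ∉ σ := by simp [hσ]
    have hznot : z ∉ σ := by simp [hσ]
    set F' : Finset (Finset (Spc N)) :=
      ({insert x σ, insert y σ, insert z σ} : Finset (Finset (Spc N))).filter
        (· ∈ M.faces) with hF'
    have htriple_card : ({insert x σ, insert y σ, insert z σ} : Finset (Finset (Spc N))).card = 3 := by
      rw [Finset.card_insert_of_notMem, Finset.card_insert_of_notMem, Finset.card_singleton]
      · simp only [Finset.mem_singleton]
        intro h
        have : y ∈ insert z σ := h ▸ Finset.mem_insert_self y σ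
        rcases Finset.mem_insert.1 this with h' | h'; exacts [hyz h', hynot h']
      · simp only [Finset.mem_insert, Finset.mem_singleton]
        rintro (h | h)
        · have : x ∈ insert y σ := h ▸ Finset.mem_insert_self x σ
          rcases Finset.mem_insert.1 this with h' | h'; exacts [hxy h', hxnot h']
        · have : x ∈ insert z σ := h ▸ Finset.mem_insert_self x σ
          rcases Finset.mem_insert.1 this with h' | h'; exacts [hxz h', hxnot h']
    have hSeq : {t | t ∈ M.faces ∧ t.card = d + 1 ∧ σ ⊆ t} = ↑F' := by
      ext t
      simp only [Set.mem_setOf_eq, hF', Finset.coe_filter, Set.mem_setOf_eq,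
        Finset.mem_insert, Finset.mem_singleton]
      constructor
      · rintro ⟨htf, htc, hσt⟩
        refine ⟨?_, htf⟩
        have h1 : (t \ σ).card = 1 := by
          rw [Finset.card_sdiff_of_subset hσt, htc, hσcard]; omega
        obtain ⟨w, hw⟩ := Finset.card_eq_one.1 h1
        have htw : t = insert w σ := by
          have := Finset.union_sdiff_of_subset hσt
          rw [hw] at this
          rw [← this, Finset.union_comm]; rfl
        have hwV : w ∈ V := hsubV t htf (htw ▸ Finset.mem_insert_self w σ)
        have hwσ : w ∉ σ := by
          intro h
          have : w ∈ t \ σ := hw ▸ Finset.mem_singleton_self w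
          exact (Finset.mem_sdiff.1 this).2 h
        have hwT : w ∈ ({x, y, z} : Finset (Spc N)) := by
          by_contra h
          exact hwσ (Finset.mem_sdiff.2 ⟨hwV, h⟩)
        rcases Finset.mem_insert.1 hwT with rfl | hwT
        · exact Or.inl htw
        rcases Finset.mem_insert.1 hwT with rfl | hwT
        · exact Or.inr (Or.inl htw)
        · rw [Finset.mem_singleton] at hwT; subst hwT; exact Or.inr (Or.inr htw)
      · rintro ⟨(rfl | rfl | rfl), htf⟩ <;>
          refine ⟨htf, ?_, Finset.subset_insert _ _⟩
        · rw [Finset.card_insert_of_notMem hxnot, hσcard]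
        · rw [Finset.card_insert_of_notMem hynot, hσcard]
        · rw [Finset.card_insert_of_notMem hznot, hσcard]
    rw [hSeq, Set.ncard_coe_finset] at key
    have hzF : insert z σ ∈ F' := by
      rw [hF', Finset.mem_filter]
      exact ⟨by simp, by rw [hzins]; exact hexy.2.2.2⟩
    have hxiff : edg y z ↔ insert x σ ∈ F' := by
      rw [hF', Finset.mem_filter]
      constructor
      · intro h; exact ⟨by simp, by rw [hxins]; exact h.2.2.2⟩
      · intro h; exact ⟨hy, hz, hyz, by rw [← hxins]; exact h.2⟩
    have hyiff : edg x z ↔ insert y σ ∈ F' := by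
      rw [hF', Finset.mem_filter]
      constructor
      · intro h; exact ⟨by simp, by rw [hyins]; exact h.2.2.2⟩
      · intro h; exact ⟨hx, hz, hxz, by rw [← hyins]; exact h.2⟩
    rw [hyiff, hxiff]
    by_cases hxF : insert x σ ∈ F' <;> by_cases hyF : insert y σ ∈ F'
    · exfalso
      have hsub : ({insert x σ, insert y σ, insert z σ} : Finset (Finset (Spc N))) ⊆ F' := by
        intro a ha
        rcases Finset.mem_insert.1 ha with rfl | ha; · exact hxF
        rcases Finset.mem_insert.1 ha with rfl | ha; · exact hyF
        rw [Finset.mem_singleton] at ha; subst ha; exact hzF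
      have := Finset.card_le_card hsub
      rw [htriple_card, key] at this; omega
    · simp [hyF, hxF]
    · simp [hyF, hxF]
    · exfalso
      have hsub : F' ⊆ {insert z σ} := by
        intro a ha
        have haT := Finset.mem_filter.1 ha
        rcases Finset.mem_insert.1 haT.1 with rfl | h
        · exact absurd ha hxF
        rcases Finset.mem_insert.1 h with rfl | h
        · exact absurd ha hyF
        · exact h
      have := Finset.card_le_card hsub
      rw [key, Finset.card_singleton] at this; omega

  -- derived edge lemmas
  have L1 : ∀ x y z : Spc N, x ≠ y → x ≠ z → y ≠ z → edg x y → edg x z → ¬ edg y z := by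
    intro x y z hxy hxz hyz h1 h2
    exact (h3set x y z h1.1 h1.2.1 h2.2.1 hxy hxz hyz h1).1 h2
  have L2 : ∀ x y z : Spc N, z ∈ V → x ≠ y → x ≠ z → y ≠ z → edg x y → ¬ edg x z → edg y z := by
    intro x y z hz hxy hxz hyz h1 h2
    by_contra h3
    exact h2 ((h3set x y z h1.1 h1.2.1 hz hxy hxz hyz h1).2 h3)
  -- initial edge
  obtain ⟨s0, hs0⟩ := hne
  obtain ⟨F0, hF0, hF0card, -⟩ := hpure s0 hs0
  obtain ⟨u, v, heuv, hF0eq⟩ := hfacet F0 hF0 hF0card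
  set A : Finset (Spc N) := V.filter (fun x => edg x v) with hA
  set B : Finset (Spc N) := V.filter (fun x => edg x u) with hB
  have huA : u ∈ A := Finset.mem_filter.2 ⟨heuv.1, heuv⟩
  have hvB : v ∈ B := Finset.mem_filter.2 ⟨heuv.2.1, esymm heuv⟩
  have hunB : u ∉ B := fun h => (Finset.mem_filter.1 h).2.2.2.1 rfl
  have hdisj : Disjoint A B := by
    rw [Finset.disjoint_left]
    intro x hxA hxB
    have h1 : edg x v := (Finset.mem_filter.1 hxA).2
    have h2 : edg x u := (Finset.mem_filter.1 hxB).2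
    exact L1 u v x heuv.2.2.1 (Ne.symm h2.2.2.1) (Ne.symm h1.2.2.1) heuv (esymm h2) (esymm h1)
  have hcover : ∀ x ∈ V, x ∈ A ∨ x ∈ B := by
    intro x hxV
    by_cases hxu : x = u
    · exact Or.inl (hxu ▸ huA)
    by_cases hxv : x = v
    · exact Or.inr (hxv ▸ hvB)
    by_cases hhx : edg u x
    · exact Or.inr (Finset.mem_filter.2 ⟨hxV, esymm hhx⟩)
    · have h := L2 u v x hxV heuv.2.2.1 (Ne.symm hxu) (Ne.symm hxv) heuv hhx
      exact Or.inl (Finset.mem_filter.2 ⟨hxV, esymm h⟩)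
  have hABV : A ∪ B = V := by
    apply Finset.Subset.antisymm
    · intro x hx
      rcases Finset.mem_union.1 hx with h | h
      exacts [(Finset.mem_filter.1 h).1, (Finset.mem_filter.1 h).1]
    · intro x hx; exact Finset.mem_union.2 (hcover x hx)
  have hnoA : ∀ x ∈ A, ∀ y ∈ A, ¬ edg x y := by
    intro x hxA y hyA hexy2
    have h1 : edg x v := (Finset.mem_filter.1 hxA).2
    have h2 : edg y v := (Finset.mem_filter.1 hyA).2
    by_cases hxu : x = u
    · subst hxu
      exact (Finset.disjoint_left.1 hdisj hyA) (Finset.mem_filter.2 ⟨h2.1, esymm hexy2⟩)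
    by_cases hyu : y = u
    · subst hyu
      exact (Finset.disjoint_left.1 hdisj hxA) (Finset.mem_filter.2 ⟨h1.1, hexy2⟩)
    · exact L1 v x y (Ne.symm h1.2.2.1) (Ne.symm h2.2.2.1) hexy2.2.2.1 (esymm h1) (esymm h2) hexy2
  have hnoB : ∀ x ∈ B, ∀ y ∈ B, ¬ edg x y := by
    intro x hxB y hyB hexy2
    have h1 : edg x u := (Finset.mem_filter.1 hxB).2
    have h2 : edg y u := (Finset.mem_filter.1 hyB).2
    by_cases hxv : x = v
    · subst hxv
      exact (Finset.disjoint_left.1 hdisj (Finset.mem_filter.2 ⟨h2.1, esymm hexy2⟩)) hyB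
    by_cases hyv : y = v
    · subst hyv
      exact (Finset.disjoint_left.1 hdisj (Finset.mem_filter.2 ⟨h1.1, hexy2⟩)) hxB
    · exact L1 u x y (Ne.symm h1.2.2.1) (Ne.symm h2.2.2.1) hexy2.2.2.1 (esymm h1) (esymm h2) hexy2
  have hends : ∀ x y : Spc N, edg x y → (x ∈ A ∧ y ∈ B) ∨ (x ∈ B ∧ y ∈ A) := by
    intro x y he
    rcases hcover x he.1 with hxA | hxB
    · rcases hcover y he.2.1 with hyA | hyB
      · exact absurd he (hnoA x hxA y hyA)
      · exact Or.inl ⟨hxA, hyB⟩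
    · rcases hcover y he.2.1 with hyA | hyB
      · exact Or.inr ⟨hxB, hyA⟩
      · exact absurd he (hnoB x hxB y hyB)
  have hbip : ∀ x ∈ A, ∀ y ∈ B, edg x y := by
    intro x hxA y hyB
    have h1 : edg x v := (Finset.mem_filter.1 hxA).2
    have h2 : edg y u := (Finset.mem_filter.1 hyB).2
    by_cases hxu : x = u
    · subst hxu; exact esymm h2
    by_cases hyv : y = v
    · subst hyv; exact h1
    have hnux : ¬ edg u x := by
      intro h
      exact (Finset.disjoint_left.1 hdisj hxA) (Finset.mem_filter.2 ⟨h.2.1, esymm h⟩)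
    have hxy : x ≠ y := fun h => (Finset.disjoint_left.1 hdisj hxA) (h ▸ hyB)
    have h3 : edg y x := L2 u y x h1.1 (fun h => hunB (h ▸ hyB)) (fun h => hxu h.symm)
      (Ne.symm hxy) (esymm h2) hnux
    exact esymm h3
  have hfacetA : ∀ w ∈ V, ∃ x y : Spc N, edg x y ∧ x ≠ w ∧ y ≠ w := by
    intro w hw
    obtain ⟨t, ht, htc, hwt⟩ := hpure {w} (hvmem w hw)
    obtain ⟨x, y, hexy2, hteq⟩ := hfacet t ht htc
    have hwm : w ∈ t := hwt (Finset.mem_singleton_self w)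
    rw [hteq, Finset.mem_sdiff] at hwm
    refine ⟨x, y, hexy2, fun h => hwm.2 ?_, fun h => hwm.2 ?_⟩
    · rw [← h]; exact Finset.mem_insert_self x {y}
    · rw [← h]; exact Finset.mem_insert_of_mem (Finset.mem_singleton_self y)
  have hAcard : 2 ≤ A.card := by
    by_contra h
    push_neg at h
    have hle : A.card ≤ 1 := by omega
    have hA1 : A = {u} := by
      rcases Finset.card_le_one_iff_subset_singleton.1 hle with ⟨w, hww⟩
      have hu : u ∈ ({w} : Finset (Spc N)) := hww huA
      rw [Finset.mem_singleton] at hu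
      subst hu
      exact Finset.Subset.antisymm hww (Finset.singleton_subset_iff.2 huA)
    obtain ⟨x, y, he, hxu, hyu⟩ := hfacetA u heuv.1
    rcases hends x y he with ⟨hxA, hyB⟩ | ⟨hxB, hyA⟩
    · rw [hA1, Finset.mem_singleton] at hxA; exact hxu hxA
    · rw [hA1, Finset.mem_singleton] at hyA; exact hyu hyA
  have hBcard : 2 ≤ B.card := by
    by_contra h
    push_neg at h
    have hle : B.card ≤ 1 := by omega
    have hB1 : B = {v} := by
      rcases Finset.card_le_one_iff_subset_singleton.1 hle with ⟨w, hww⟩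
      have hv : v ∈ ({w} : Finset (Spc N)) := hww hvB
      rw [Finset.mem_singleton] at hv
      subst hv
      exact Finset.Subset.antisymm hww (Finset.singleton_subset_iff.2 hvB)
    obtain ⟨x, y, he, hxv, hyv⟩ := hfacetA v heuv.2.1
    rcases hends x y he with ⟨hxA, hyB⟩ | ⟨hxB, hyA⟩
    · rw [hB1, Finset.mem_singleton] at hyB; exact hyv hyB
    · rw [hB1, Finset.mem_singleton] at hxB; exact hxv hxB
  have hfaces : M.faces = {t | t ≠ ∅ ∧ ∃ α β : Finset (Spc N),
      α ⊆ A ∧ α ≠ A ∧ β ⊆ B ∧ β ≠ B ∧ t = α ∪ β} := by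
    ext t
    simp only [Set.mem_setOf_eq]
    constructor
    · intro ht
      refine ⟨fun h => M.empty_notMem (h ▸ ht), ?_⟩
      obtain ⟨F, hF, hFc, htF⟩ := hpure t ht
      obtain ⟨x, y, he, hFeq⟩ := hfacet F hF hFc
      have htV : t ⊆ V := hsubV t ht
      have htAB : t ∩ A ∪ t ∩ B = t := by
        rw [← Finset.inter_union_distrib_left, hABV, Finset.inter_eq_left.2 htV]
      have hxt : x ∉ t := by
        intro hh
        have h2 := htF hh
        rw [hFeq, Finset.mem_sdiff] at h2
        exact h2.2 (Finset.mem_insert_self x {y})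
      have hyt : y ∉ t := by
        intro hh
        have h2 := htF hh
        rw [hFeq, Finset.mem_sdiff] at h2
        exact h2.2 (Finset.mem_insert_of_mem (Finset.mem_singleton_self y))
      rcases hends x y he with ⟨hxA, hyB⟩ | ⟨hxB, hyA⟩
      · refine ⟨t ∩ A, t ∩ B, Finset.inter_subset_right, ?_, Finset.inter_subset_right, ?_,
          htAB.symm⟩
        · intro h
          rw [← h] at hxA
          exact hxt (Finset.mem_of_mem_inter_left hxA)
        · intro h
          rw [← h] at hyB
          exact hyt (Finset.mem_of_mem_inter_left hyB)
      · refine ⟨t ∩ A, t ∩ B, Finset.inter_subset_right, ?_, Finset.inter_subset_right, ?_,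
          htAB.symm⟩
        · intro h
          rw [← h] at hyA
          exact hyt (Finset.mem_of_mem_inter_left hyA)
        · intro h
          rw [← h] at hxB
          exact hxt (Finset.mem_of_mem_inter_left hxB)
    · rintro ⟨htne, α, β, hαA, hαnA, hβB, hβnB, rfl⟩
      have hxa : ∃ x ∈ A, x ∉ α := by
        by_contra hcon
        push_neg at hcon
        exact hαnA (Finset.Subset.antisymm hαA (fun x hx => hcon x hx))
      have hyb : ∃ y ∈ B, y ∉ β := by
        by_contra hcon
        push_neg at hcon
        exact hβnB (Finset.Subset.antisymm hβB (fun y hy => hcon y hy))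
      obtain ⟨x, hxA, hxα⟩ := hxa
      obtain ⟨y, hyB, hyβ⟩ := hyb
      have he := hbip x hxA y hyB
      apply M.down_closed he.2.2.2 ?_ (Finset.nonempty_iff_ne_empty.2 htne)
      intro a ha
      rcases Finset.mem_union.1 ha with h | h
      · refine Finset.mem_sdiff.2 ⟨(Finset.mem_filter.1 (hαA h)).1, ?_⟩
        intro hm
        rcases Finset.mem_insert.1 hm with rfl | hm
        · exact hxα h
        · rw [Finset.mem_singleton] at hm; subst hm
          exact (Finset.disjoint_left.1 hdisj (hαA h)) hyB
      · refine Finset.mem_sdiff.2 ⟨(Finset.mem_filter.1 (hβB h)).1, ?_⟩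
        intro hm
        rcases Finset.mem_insert.1 hm with rfl | hm
        · exact (Finset.disjoint_left.1 hdisj hxA) (hβB h)
        · rw [Finset.mem_singleton] at hm; subst hm
          exact hyβ h
  have hsum : A.card + B.card = d + 3 := by
    rw [← Finset.card_union_of_disjoint hdisj, hABV, hV]
  refine ⟨A.card - 2, by omega, A, B, hdisj, by omega, by omega, hfaces⟩



/-! ### auxiliary model: join of two simplex boundaries in `ℝ^{d+1}` -/

/-- standard basis vector -/
def ev {n : ℕ} (k : Fin n) : Spc n := fun j => if j = k then 1 else 0

def fA (d c : ℕ) : Spc (d + 1) := fun j => if (j : ℕ) ≤ c then -1 else 0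

def fB (d c : ℕ) : Spc (d + 1) := fun j => if c < (j : ℕ) then -1 else 0

def IA (d c : ℕ) : Finset (Fin (d + 1)) := Finset.univ.filter (fun k => (k : ℕ) ≤ c)

def IB (d c : ℕ) : Finset (Fin (d + 1)) := Finset.univ.filter (fun k => c < (k : ℕ))

noncomputable def SA (d c : ℕ) : Finset (Spc (d + 1)) := insert (fA d c) ((IA d c).image ev)

noncomputable def SB (d c : ℕ) : Finset (Spc (d + 1)) := insert (fB d c) ((IB d c).image ev)

lemma ev_inj {n : ℕ} : Function.Injective (ev (n := n)) := by
  intro a b h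
  by_contra hab
  have h2 := congrFun h a
  simp only [ev, if_pos rfl, if_neg (fun hh : a = b => hab hh)] at h2
  exact one_ne_zero h2

lemma mem_IA {d c : ℕ} {k : Fin (d + 1)} : k ∈ IA d c ↔ (k : ℕ) ≤ c := by simp [IA]

lemma mem_IB {d c : ℕ} {k : Fin (d + 1)} : k ∈ IB d c ↔ c < (k : ℕ) := by simp [IB]

lemma fA_ne_ev {d c : ℕ} (k : Fin (d + 1)) : fA d c ≠ ev k := by
  intro h
  have h2 := congrFun h k
  simp only [fA, ev, if_pos rfl] at h2
  split_ifs at h2 <;> linarith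

lemma fB_ne_ev {d c : ℕ} (k : Fin (d + 1)) : fB d c ≠ ev k := by
  intro h
  have h2 := congrFun h k
  simp only [fB, ev, if_pos rfl] at h2
  split_ifs at h2 <;> linarith

lemma fA_ne_fB {d c : ℕ} : fA d c ≠ fB d c := by
  intro h
  have h2 := congrFun h 0
  simp only [fA, fB] at h2
  have h0 : ((0 : Fin (d + 1)) : ℕ) = 0 := rfl
  rw [h0, if_pos (Nat.zero_le c), if_neg (Nat.not_lt_zero c)] at h2
  norm_num at h2

lemma mem_SA {d c : ℕ} {v : Spc (d + 1)} :
    v ∈ SA d c ↔ v = fA d c ∨ ∃ k : Fin (d + 1), (k : ℕ) ≤ c ∧ v = ev k := by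
  simp only [SA, Finset.mem_insert, Finset.mem_image, mem_IA]
  constructor
  · rintro (h | ⟨k, hk, rfl⟩)
    · exact Or.inl h
    · exact Or.inr ⟨k, hk, rfl⟩
  · rintro (h | ⟨k, hk, rfl⟩)
    · exact Or.inl h
    · exact Or.inr ⟨k, hk, rfl⟩

lemma mem_SB {d c : ℕ} {v : Spc (d + 1)} :
    v ∈ SB d c ↔ v = fB d c ∨ ∃ k : Fin (d + 1), c < (k : ℕ) ∧ v = ev k := by
  simp only [SB, Finset.mem_insert, Finset.mem_image, mem_IB]
  constructor
  · rintro (h | ⟨k, hk, rfl⟩)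
    · exact Or.inl h
    · exact Or.inr ⟨k, hk, rfl⟩
  · rintro (h | ⟨k, hk, rfl⟩)
    · exact Or.inl h
    · exact Or.inr ⟨k, hk, rfl⟩

lemma disj_SASB {d c : ℕ} : Disjoint (SA d c) (SB d c) := by
  rw [Finset.disjoint_left]
  intro v hvA hvB
  rcases mem_SA.1 hvA with rfl | ⟨k, hk, rfl⟩
  · rcases mem_SB.1 hvB with h | ⟨k, hk, h⟩
    · exact fA_ne_fB h
    · exact fA_ne_ev k h
  · rcases mem_SB.1 hvB with h | ⟨k', hk', h⟩
    · exact fB_ne_ev k h.symm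
    · have : k = k' := ev_inj h
      omega

lemma IA_card {d c : ℕ} (hc : c ≤ d) : (IA d c).card = c + 1 := by
  have : IA d c = Finset.univ.image (fun i : Fin (c + 1) => Fin.castLE (by omega) i) := by
    ext k
    simp only [mem_IA, Finset.mem_image, Finset.mem_univ, true_and]
    constructor
    · intro hk
      exact ⟨⟨(k : ℕ), by omega⟩, by ext; simp [Fin.castLE]⟩
    · rintro ⟨i, rfl⟩
      simpa [Fin.castLE] using by omega
  rw [this, Finset.card_image_of_injective _ (Fin.castLE_injective _), Finset.card_univ,
    Fintype.card_fin]

lemma IB_card {d c : ℕ} (hc : c ≤ d) : (IB d c).card = d - c := by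
  have : IB d c = Finset.univ.image
      (fun i : Fin (d - c) => (⟨c + 1 + (i : ℕ), by have := i.2; omega⟩ : Fin (d + 1))) := by
    ext k
    simp only [mem_IB, Finset.mem_image, Finset.mem_univ, true_and]
    constructor
    · intro hk
      exact ⟨⟨(k : ℕ) - c - 1, by have := k.2; omega⟩, by ext; simp; omega⟩
    · rintro ⟨i, rfl⟩
      simp; omega
  rw [this, Finset.card_image_of_injective _ ?_, Finset.card_univ, Fintype.card_fin]
  intro a b hab
  have : c + 1 + (a : ℕ) = c + 1 + (b : ℕ) := congrArg Fin.val hab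
  exact Fin.ext (by omega)

lemma fA_not_mem_image {d c : ℕ} : fA d c ∉ (IA d c).image ev := by
  intro h
  obtain ⟨k, -, hk⟩ := Finset.mem_image.1 h
  exact fA_ne_ev k hk.symm

lemma fB_not_mem_image {d c : ℕ} : fB d c ∉ (IB d c).image ev := by
  intro h
  obtain ⟨k, -, hk⟩ := Finset.mem_image.1 h
  exact fB_ne_ev k hk.symm

lemma SA_card {d c : ℕ} (hc : c ≤ d) : (SA d c).card = c + 2 := by
  rw [SA, Finset.card_insert_of_notMem fA_not_mem_image,
    Finset.card_image_of_injective _ ev_inj, IA_card hc]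

lemma SB_card {d c : ℕ} (hc : c ≤ d) : (SB d c).card = d - c + 1 := by
  rw [SB, Finset.card_insert_of_notMem fB_not_mem_image,
    Finset.card_image_of_injective _ ev_inj, IB_card hc]

lemma fA_mem_SA {d c : ℕ} : fA d c ∈ SA d c := Finset.mem_insert_self _ _
lemma fB_mem_SB {d c : ℕ} : fB d c ∈ SB d c := Finset.mem_insert_self _ _

lemma sum_SA {d c : ℕ} : ∑ v ∈ SA d c, v = 0 := by
  rw [SA, Finset.sum_insert fA_not_mem_image, Finset.sum_image (fun a _ b _ h => ev_inj h)]
  funext j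
  rw [Pi.add_apply, Finset.sum_apply, Pi.zero_apply]
  have : ∑ k ∈ IA d c, ev k j = ∑ k ∈ IA d c, (if j = k then (1 : ℝ) else 0) := rfl
  rw [this, Finset.sum_ite_eq (IA d c) j (fun _ => (1 : ℝ))]
  by_cases hj : (j : ℕ) ≤ c
  · rw [if_pos (mem_IA.2 hj)]; simp [fA, hj]
  · rw [if_neg (fun h => hj (mem_IA.1 h))]; simp [fA, hj]

lemma sum_SB {d c : ℕ} : ∑ v ∈ SB d c, v = 0 := by
  rw [SB, Finset.sum_insert fB_not_mem_image, Finset.sum_image (fun a _ b _ h => ev_inj h)]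
  funext j
  rw [Pi.add_apply, Finset.sum_apply, Pi.zero_apply]
  have : ∑ k ∈ IB d c, ev k j = ∑ k ∈ IB d c, (if j = k then (1 : ℝ) else 0) := rfl
  rw [this, Finset.sum_ite_eq (IB d c) j (fun _ => (1 : ℝ))]
  by_cases hj : c < (j : ℕ)
  · rw [if_pos (mem_IB.2 hj)]; simp [fB, hj]
  · rw [if_neg (fun h => hj (mem_IB.1 h))]; simp [fB, hj]

/-- the linear functional with coefficient vector `g` -/
def lmap {n : ℕ} (g : Fin n → ℝ) : Spc n →ₗ[ℝ] ℝ where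
  toFun x := ∑ k, g k * x k
  map_add' x y := by
    simp only [Pi.add_apply, mul_add]
    rw [Finset.sum_add_distrib]
  map_smul' a x := by
    simp only [Pi.smul_apply, smul_eq_mul, RingHom.id_apply]
    rw [Finset.mul_sum]
    congr 1; funext k; ring

noncomputable def clmap {n : ℕ} (g : Fin n → ℝ) : Spc n →L[ℝ] ℝ :=
  LinearMap.toContinuousLinearMap (lmap g)

lemma clmap_apply {n : ℕ} (g : Fin n → ℝ) (x : Spc n) : clmap g x = ∑ k, g k * x k := rfl

lemma clmap_ev {n : ℕ} (g : Fin n → ℝ) (k : Fin n) : clmap g (ev k) = g k := by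
  rw [clmap_apply]
  have : ∀ j, g j * ev k j = if k = j then g j else 0 := by
    intro j
    simp only [ev]
    by_cases h : j = k
    · subst h; simp
    · rw [if_neg h, if_neg (fun hh => h hh.symm), mul_zero]
  rw [Finset.sum_congr rfl (fun j _ => this j), Finset.sum_ite_eq Finset.univ k g,
    if_pos (Finset.mem_univ k)]

lemma clmap_fA {d c : ℕ} (g : Fin (d + 1) → ℝ) :
    clmap g (fA d c) = -∑ k ∈ IA d c, g k := by
  rw [clmap_apply]
  have : ∀ j : Fin (d + 1), g j * fA d c j = if j ∈ IA d c then -g j else 0 := by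
    intro j
    simp only [fA, mem_IA]
    by_cases h : (j : ℕ) ≤ c <;> simp [h]
  rw [Finset.sum_congr rfl (fun j _ => this j), Finset.sum_ite_mem,
    Finset.univ_inter, Finset.sum_neg_distrib]

lemma clmap_fB {d c : ℕ} (g : Fin (d + 1) → ℝ) :
    clmap g (fB d c) = -∑ k ∈ IB d c, g k := by
  rw [clmap_apply]
  have : ∀ j : Fin (d + 1), g j * fB d c j = if j ∈ IB d c then -g j else 0 := by
    intro j
    simp only [fB, mem_IB]
    by_cases h : c < (j : ℕ) <;> simp [h]
  rw [Finset.sum_congr rfl (fun j _ => this j), Finset.sum_ite_mem,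
    Finset.univ_inter, Finset.sum_neg_distrib]

/-- The coefficient (radon relation) lemma: any linear relation on `SA ∪ SB` has
coefficients constant on `SA` and on `SB`. -/
lemma coeff_const {d c : ℕ} (hc : c < d) (μ : Spc (d + 1) → ℝ)
    (h : ∑ v ∈ SA d c ∪ SB d c, μ v • v = 0) :
    (∀ v ∈ SA d c, μ v = μ (fA d c)) ∧ (∀ v ∈ SB d c, μ v = μ (fB d c)) := by
  have heval : ∀ j : Fin (d + 1), ∑ v ∈ SA d c ∪ SB d c, μ v * v j = 0 := by
    intro j
    have := congrFun h j
    rw [Finset.sum_apply] at this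
    simpa using this
  constructor
  · intro v hv
    rcases mem_SA.1 hv with rfl | ⟨k, hk, rfl⟩
    · rfl
    · -- evaluate at coordinate k
      have hpair : ({ev k, fA d c} : Finset (Spc (d + 1))) ⊆ SA d c ∪ SB d c := by
        intro a ha
        rcases Finset.mem_insert.1 ha with rfl | ha
        · exact Finset.mem_union_left _ hv
        · rw [Finset.mem_singleton] at ha; subst ha
          exact Finset.mem_union_left _ fA_mem_SA
      have hzero : ∀ a ∈ SA d c ∪ SB d c, a ∉ ({ev k, fA d c} : Finset (Spc (d + 1))) →
          μ a * a k = 0 := by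
        intro a ha hna
        simp only [Finset.mem_insert, Finset.mem_singleton, not_or] at hna
        rcases Finset.mem_union.1 ha with ha | ha
        · rcases mem_SA.1 ha with rfl | ⟨k', hk', rfl⟩
          · exact absurd rfl hna.2
          · have hkk : k' ≠ k := fun hh => hna.1 (by rw [hh])
            have hz : ev k' k = 0 := by
              simp only [ev]
              exact if_neg (fun hh : k = k' => hkk hh.symm)
            rw [hz, mul_zero]
        · rcases mem_SB.1 ha with rfl | ⟨k', hk', rfl⟩
          · simp [fB, Nat.not_lt.2 hk]
          · have hkk : k' ≠ k := fun hh => by omega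
            have hz : ev k' k = 0 := by
              simp only [ev]
              exact if_neg (fun hh : k = k' => hkk hh.symm)
            rw [hz, mul_zero]
      have hsum := Finset.sum_subset hpair hzero
      rw [heval k] at hsum
      rw [Finset.sum_pair (fun hh => fA_ne_ev k hh.symm)] at hsum
      have h1 : ev k k = 1 := by simp [ev]
      have h2 : fA d c k = -1 := by simp [fA, hk]
      rw [h1, h2] at hsum
      linarith
  · intro v hv
    rcases mem_SB.1 hv with rfl | ⟨k, hk, rfl⟩
    · rfl
    · have hpair : ({ev k, fB d c} : Finset (Spc (d + 1))) ⊆ SA d c ∪ SB d c := by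
        intro a ha
        rcases Finset.mem_insert.1 ha with rfl | ha
        · exact Finset.mem_union_right _ hv
        · rw [Finset.mem_singleton] at ha; subst ha
          exact Finset.mem_union_right _ fB_mem_SB
      have hzero : ∀ a ∈ SA d c ∪ SB d c, a ∉ ({ev k, fB d c} : Finset (Spc (d + 1))) →
          μ a * a k = 0 := by
        intro a ha hna
        simp only [Finset.mem_insert, Finset.mem_singleton, not_or] at hna
        rcases Finset.mem_union.1 ha with ha | ha
        · rcases mem_SA.1 ha with rfl | ⟨k', hk', rfl⟩
          · simp [fA, Nat.not_le.2 hk]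
          · have hkk : k' ≠ k := fun hh => by omega
            have hz : ev k' k = 0 := by
              simp only [ev]
              exact if_neg (fun hh : k = k' => hkk hh.symm)
            rw [hz, mul_zero]
        · rcases mem_SB.1 ha with rfl | ⟨k', hk', rfl⟩
          · exact absurd rfl hna.2
          · have hkk : k' ≠ k := fun hh => hna.1 (by rw [hh])
            have hz : ev k' k = 0 := by
              simp only [ev]
              exact if_neg (fun hh : k = k' => hkk hh.symm)
            rw [hz, mul_zero]
      have hsum := Finset.sum_subset hpair hzero
      rw [heval k] at hsum
      rw [Finset.sum_pair (fun hh => fB_ne_ev k hh.symm)] at hsum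
      have h1 : ev k k = 1 := by simp [ev]
      have h2 : fB d c k = -1 := by simp [fB, hk]
      rw [h1, h2] at hsum
      linarith

/-! ### convex hull representations -/

lemma rep_of_mem_hull {n : ℕ} {s : Finset (Spc n)} {x : Spc n}
    (hx : x ∈ convexHull ℝ (s : Set (Spc n))) :
    ∃ w : Spc n → ℝ, (∀ y ∈ s, 0 ≤ w y) ∧ ∑ y ∈ s, w y = 1 ∧ ∑ y ∈ s, w y • y = x := by
  rw [Finset.convexHull_eq] at hx
  obtain ⟨w, hw0, hw1, hwx⟩ := hx
  refine ⟨w, hw0, hw1, ?_⟩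
  rw [← hwx, Finset.centerMass_eq_of_sum_1 _ _ hw1]
  rfl

lemma mem_hull_of_rep {n : ℕ} {s : Finset (Spc n)} {x : Spc n} (w : Spc n → ℝ)
    (hw0 : ∀ y ∈ s, 0 ≤ w y) (hw1 : ∑ y ∈ s, w y = 1) (hwx : ∑ y ∈ s, w y • y = x) :
    x ∈ convexHull ℝ (s : Set (Spc n)) := by
  rw [Finset.convexHull_eq]
  refine ⟨w, hw0, hw1, ?_⟩
  rw [Finset.centerMass_eq_of_sum_1 _ _ hw1]
  exact hwx

/-! ### the join complex -/

def JF (d c : ℕ) : Set (Finset (Spc (d + 1))) :=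
  {t | t ≠ ∅ ∧ ∃ α β : Finset (Spc (d + 1)),
    α ⊆ SA d c ∧ α ≠ SA d c ∧ β ⊆ SB d c ∧ β ≠ SB d c ∧ t = α ∪ β}

lemma JF_subset {d c : ℕ} {t : Finset (Spc (d + 1))} (ht : t ∈ JF d c) :
    t ⊆ SA d c ∪ SB d c := by
  obtain ⟨-, α, β, hα, -, hβ, -, rfl⟩ := ht
  exact Finset.union_subset_union hα hβ

lemma exists_missing {β : Type*} [DecidableEq β] {s t : Finset β} (h1 : s ⊆ t) (h2 : s ≠ t) :
    ∃ x ∈ t, x ∉ s := by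
  by_contra hcon
  push_neg at hcon
  exact h2 (Finset.Subset.antisymm h1 hcon)

/-- key: zero coefficients lemma for faces of the join complex -/
lemma face_coeff_zero {d c : ℕ} (hc : c < d) {t : Finset (Spc (d + 1))} (ht : t ∈ JF d c)
    (μ : Spc (d + 1) → ℝ) (hsupp : ∀ v, v ∉ t → μ v = 0)
    (h : ∑ v ∈ SA d c ∪ SB d c, μ v • v = 0) : ∀ v, μ v = 0 := by
  obtain ⟨-, α, β, hα, hαne, hβ, hβne, rfl⟩ := ht
  obtain ⟨hA, hB⟩ := coeff_const hc μ h
  obtain ⟨x0, hx0S, hx0⟩ := exists_missing hα hαne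
  obtain ⟨y0, hy0S, hy0⟩ := exists_missing hβ hβne
  have hx0t : x0 ∉ α ∪ β := by
    intro hh
    rcases Finset.mem_union.1 hh with hh | hh
    · exact hx0 hh
    · exact (Finset.disjoint_left.1 disj_SASB hx0S) (hβ hh)
  have hy0t : y0 ∉ α ∪ β := by
    intro hh
    rcases Finset.mem_union.1 hh with hh | hh
    · exact (Finset.disjoint_left.1 disj_SASB (hα hh)) hy0S
    · exact hy0 hh
  have hfa : μ (fA d c) = 0 := by rw [← hA x0 hx0S]; exact hsupp x0 hx0t
  have hfb : μ (fB d c) = 0 := by rw [← hB y0 hy0S]; exact hsupp y0 hy0t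
  intro v
  by_cases hv : v ∈ α ∪ β
  · rcases Finset.mem_union.1 hv with hv | hv
    · rw [hA v (hα hv), hfa]
    · rw [hB v (hβ hv), hfb]
  · exact hsupp v hv

lemma JF_indep {d c : ℕ} (hc : c < d) {t : Finset (Spc (d + 1))} (ht : t ∈ JF d c) :
    AffineIndependent ℝ ((↑) : t → Spc (d + 1)) := by
  classical
  rw [affineIndependent_iff]
  intro s w hw0 hcomb i his
  set μ : Spc (d + 1) → ℝ := fun a => ∑ j ∈ s, (if (j : Spc (d + 1)) = a then w j else 0)
    with hμ
  have hμval : ∀ j ∈ s, μ (j : Spc (d + 1)) = w j := by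
    intro j hj
    show (∑ j' ∈ s, if (j' : Spc (d + 1)) = (j : Spc (d + 1)) then w j' else 0) = w j
    have : ∀ j' ∈ s, (if (j' : Spc (d + 1)) = (j : Spc (d + 1)) then w j' else 0)
        = (if j' = j then w j' else 0) := by
      intro j' _
      congr 1
      simp only [eq_iff_iff]
      exact ⟨fun hh => Subtype.coe_injective hh, fun hh => by rw [hh]⟩
    rw [Finset.sum_congr rfl this, Finset.sum_ite_eq' s j w, if_pos hj]
  have hμsupp : ∀ v, v ∉ t → μ v = 0 := by
    intro v hv
    show (∑ j ∈ s, if (j : Spc (d + 1)) = v then w j else 0) = 0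
    apply Finset.sum_eq_zero
    intro j _
    rw [if_neg]
    intro hh
    exact hv (hh ▸ j.2)
  have hμsum : ∑ v ∈ SA d c ∪ SB d c, μ v • v = 0 := by
    show ∑ v ∈ SA d c ∪ SB d c, (∑ j ∈ s, if (j : Spc (d + 1)) = v then w j else 0) • v = 0
    have : ∀ v ∈ SA d c ∪ SB d c,
        (∑ j ∈ s, (if (j : Spc (d + 1)) = v then w j else 0)) • v
        = ∑ j ∈ s, (if (j : Spc (d + 1)) = v then w j • v else 0) := by
      intro v _
      rw [Finset.sum_smul]
      congr 1; funext j
      split_ifs <;> simp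
    rw [Finset.sum_congr rfl this, Finset.sum_comm]
    have h2 : ∀ j ∈ s, ∑ v ∈ SA d c ∪ SB d c, (if (j : Spc (d + 1)) = v then w j • v else 0)
        = w j • (j : Spc (d + 1)) := by
      intro j _
      rw [Finset.sum_ite_eq (SA d c ∪ SB d c) (j : Spc (d + 1)) (fun v => w j • v),
        if_pos (JF_subset ht j.2)]
    rw [Finset.sum_congr rfl h2]
    exact hcomb
  have := face_coeff_zero hc ht μ hμsupp hμsum (i : Spc (d + 1))
  rw [hμval i his] at this
  exact this

lemma JF_inter {d c : ℕ} (hc : c < d) {t u : Finset (Spc (d + 1))} (ht : t ∈ JF d c)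
    (hu : u ∈ JF d c) :
    convexHull ℝ (t : Set (Spc (d + 1))) ∩ convexHull ℝ (u : Set (Spc (d + 1))) ⊆
      convexHull ℝ ((t : Set (Spc (d + 1))) ∩ u) := by
  classical
  rintro x ⟨hxt, hxu⟩
  obtain ⟨w, hw0, hw1, hwx⟩ := rep_of_mem_hull hxt
  obtain ⟨w', hw'0, hw'1, hw'x⟩ := rep_of_mem_hull hxu
  set μ : Spc (d + 1) → ℝ := fun a => if a ∈ t then w a else 0 with hμ
  set μ' : Spc (d + 1) → ℝ := fun a => if a ∈ u then w' a else 0 with hμ'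
  have hWt := JF_subset ht
  have hWu := JF_subset hu
  have hμx : ∑ v ∈ SA d c ∪ SB d c, μ v • v = x := by
    rw [← Finset.sum_subset hWt (fun a _ ha => by
      show (if a ∈ t then w a else 0) • a = 0
      rw [if_neg ha, zero_smul])]
    rw [← hwx]
    exact Finset.sum_congr rfl (fun v hv => by
      show (if v ∈ t then w v else 0) • v = w v • v
      rw [if_pos hv])
  have hμ'x : ∑ v ∈ SA d c ∪ SB d c, μ' v • v = x := by
    rw [← Finset.sum_subset hWu (fun a _ ha => by
      show (if a ∈ u then w' a else 0) • a = 0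
      rw [if_neg ha, zero_smul])]
    rw [← hw'x]
    exact Finset.sum_congr rfl (fun v hv => by
      show (if v ∈ u then w' v else 0) • v = w' v • v
      rw [if_pos hv])
  have hδ : ∑ v ∈ SA d c ∪ SB d c, (μ v - μ' v) • v = 0 := by
    have : ∀ v ∈ SA d c ∪ SB d c, (μ v - μ' v) • v = μ v • v - μ' v • v :=
      fun v _ => sub_smul _ _ _
    rw [Finset.sum_congr rfl this, Finset.sum_sub_distrib, hμx, hμ'x, sub_self]
  obtain ⟨hA, hB⟩ := coeff_const hc (fun v => μ v - μ' v) hδ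
  obtain ⟨-, α, β, hα, hαne, hβ, hβne, rfl⟩ := ht
  obtain ⟨-, α', β', hα', hα'ne, hβ', hβ'ne, rfl⟩ := hu
  obtain ⟨x0, hx0S, hx0⟩ := exists_missing hα hαne
  obtain ⟨x1, hx1S, hx1⟩ := exists_missing hα' hα'ne
  obtain ⟨y0, hy0S, hy0⟩ := exists_missing hβ hβne
  obtain ⟨y1, hy1S, hy1⟩ := exists_missing hβ' hβ'ne
  have hnotA : ∀ z, z ∈ SA d c → z ∉ α → z ∉ α ∪ β := by
    intro z hzS hz hh
    rcases Finset.mem_union.1 hh with hh | hh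
    · exact hz hh
    · exact (Finset.disjoint_left.1 disj_SASB hzS) (hβ hh)
  have hnotA' : ∀ z, z ∈ SA d c → z ∉ α' → z ∉ α' ∪ β' := by
    intro z hzS hz hh
    rcases Finset.mem_union.1 hh with hh | hh
    · exact hz hh
    · exact (Finset.disjoint_left.1 disj_SASB hzS) (hβ' hh)
  have hnotB : ∀ z, z ∈ SB d c → z ∉ β → z ∉ α ∪ β := by
    intro z hzS hz hh
    rcases Finset.mem_union.1 hh with hh | hh
    · exact (Finset.disjoint_left.1 disj_SASB (hα hh)) hzS
    · exact hz hh
  have hnotB' : ∀ z, z ∈ SB d c → z ∉ β' → z ∉ α' ∪ β' := by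
    intro z hzS hz hh
    rcases Finset.mem_union.1 hh with hh | hh
    · exact (Finset.disjoint_left.1 disj_SASB (hα' hh)) hzS
    · exact hz hh
  have hfa : μ (fA d c) - μ' (fA d c) = 0 := by
    have h1 := hA x0 hx0S
    have h2 := hA x1 hx1S
    have e1 : μ x0 = 0 := by
      show (if x0 ∈ α ∪ β then w x0 else 0) = 0
      rw [if_neg (hnotA x0 hx0S hx0)]
    have e2 : μ' x1 = 0 := by
      show (if x1 ∈ α' ∪ β' then w' x1 else 0) = 0
      rw [if_neg (hnotA' x1 hx1S hx1)]
    have e3 : 0 ≤ μ' x0 := by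
      show 0 ≤ (if x0 ∈ α' ∪ β' then w' x0 else 0)
      split_ifs with hh
      · exact hw'0 x0 hh
      · exact le_refl 0
    have e4 : 0 ≤ μ x1 := by
      show 0 ≤ (if x1 ∈ α ∪ β then w x1 else 0)
      split_ifs with hh
      · exact hw0 x1 hh
      · exact le_refl 0
    simp only [e1, e2] at h1 h2
    linarith
  have hfb : μ (fB d c) - μ' (fB d c) = 0 := by
    have h1 := hB y0 hy0S
    have h2 := hB y1 hy1S
    have e1 : μ y0 = 0 := by
      show (if y0 ∈ α ∪ β then w y0 else 0) = 0
      rw [if_neg (hnotB y0 hy0S hy0)]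
    have e2 : μ' y1 = 0 := by
      show (if y1 ∈ α' ∪ β' then w' y1 else 0) = 0
      rw [if_neg (hnotB' y1 hy1S hy1)]
    have e3 : 0 ≤ μ' y0 := by
      show 0 ≤ (if y0 ∈ α' ∪ β' then w' y0 else 0)
      split_ifs with hh
      · exact hw'0 y0 hh
      · exact le_refl 0
    have e4 : 0 ≤ μ y1 := by
      show 0 ≤ (if y1 ∈ α ∪ β then w y1 else 0)
      split_ifs with hh
      · exact hw0 y1 hh
      · exact le_refl 0
    simp only [e1, e2] at h1 h2
    linarith
  have heq : ∀ v ∈ (α ∪ β) ∪ (α' ∪ β'), μ v = μ' v := by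
    intro v hv
    have hvW : v ∈ SA d c ∪ SB d c := by
      rcases Finset.mem_union.1 hv with hv | hv
      exacts [hWt hv, hWu hv]
    rcases Finset.mem_union.1 hvW with hvS | hvS
    · have := hA v hvS; linarith [hfa]
    · have := hB v hvS; linarith [hfb]
  have hwz : ∀ v ∈ α ∪ β, v ∉ α' ∪ β' → w v = 0 := by
    intro v hv hv'
    have h1 := heq v (Finset.mem_union_left _ hv)
    have h2 : μ v = w v := by
      show (if v ∈ α ∪ β then w v else 0) = w v
      rw [if_pos hv]
    have h3 : μ' v = 0 := by
      show (if v ∈ α' ∪ β' then w' v else 0) = 0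
      rw [if_neg hv']
    rw [h2, h3] at h1
    exact h1
  rw [← Finset.coe_inter]
  refine mem_hull_of_rep w (fun y hy => hw0 y (Finset.mem_inter.1 hy).1) ?_ ?_
  · rw [Finset.sum_subset (Finset.inter_subset_left)
      (fun a ha ha2 => hwz a ha (fun hh => ha2 (Finset.mem_inter.2 ⟨ha, hh⟩)))]
    exact hw1
  · rw [Finset.sum_subset (Finset.inter_subset_left)
      (fun a ha ha2 => by
        rw [hwz a ha (fun hh => ha2 (Finset.mem_inter.2 ⟨ha, hh⟩)), zero_smul])]
    exact hwx


noncomputable def LC (d c : ℕ) (hc : c < d) : SimplicialComplex ℝ (Spc (d + 1)) where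
  faces := JF d c
  indep h := JF_indep hc h
  isRelLowerSet_faces := by
    intro s hs
    refine ⟨Finset.nonempty_iff_ne_empty.2 hs.1, fun t hts ht => ?_⟩
    replace ht := ht.ne_empty
    obtain ⟨-, α, β, hα, hαne, hβ, hβne, rfl⟩ := hs
    refine ⟨ht, t ∩ α, t ∩ β, Finset.inter_subset_right.trans hα, ?_,
      Finset.inter_subset_right.trans hβ, ?_, ?_⟩
    · intro h
      obtain ⟨x0, hx0S, hx0⟩ := exists_missing hα hαne
      rw [← h, Finset.mem_inter] at hx0S
      exact hx0 hx0S.2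
    · intro h
      obtain ⟨y0, hy0S, hy0⟩ := exists_missing hβ hβne
      rw [← h, Finset.mem_inter] at hy0S
      exact hy0 hy0S.2
    · rw [← Finset.inter_union_distrib_left, Finset.inter_eq_left.2 hts]
  inter_subset_convexHull hs ht := JF_inter hc hs ht

/-! ### exposed faces machinery -/

lemma lmap_rep {n : ℕ} (ℓ : Spc n →L[ℝ] ℝ) (s : Finset (Spc n)) (w : Spc n → ℝ) :
    ℓ (∑ y ∈ s, w y • y) = ∑ y ∈ s, w y * ℓ y := by
  rw [map_sum]
  exact Finset.sum_congr rfl (fun y _ => by rw [map_smul, smul_eq_mul])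

lemma hull_le {n : ℕ} {W : Finset (Spc n)} (ℓ : Spc n →L[ℝ] ℝ) {Mx : ℝ}
    (h : ∀ v ∈ W, ℓ v ≤ Mx) :
    ∀ x ∈ convexHull ℝ (W : Set (Spc n)), ℓ x ≤ Mx := by
  intro x hx
  obtain ⟨w, hw0, hw1, hwx⟩ := rep_of_mem_hull hx
  rw [← hwx, lmap_rep]
  calc ∑ y ∈ W, w y * ℓ y ≤ ∑ y ∈ W, w y * Mx := by
        apply Finset.sum_le_sum
        intro y hy
        exact mul_le_mul_of_nonneg_left (h y hy) (hw0 y hy)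
    _ = Mx := by rw [← Finset.sum_mul, hw1, one_mul]

lemma hull_eq_of_eq {n : ℕ} {W : Finset (Spc n)} (ℓ : Spc n →L[ℝ] ℝ) {Mx : ℝ}
    (h : ∀ v ∈ W, ℓ v = Mx) :
    ∀ x ∈ convexHull ℝ (W : Set (Spc n)), ℓ x = Mx := by
  intro x hx
  obtain ⟨w, hw0, hw1, hwx⟩ := rep_of_mem_hull hx
  rw [← hwx, lmap_rep]
  rw [Finset.sum_congr rfl (fun y hy => by rw [h y hy])]
  rw [← Finset.sum_mul, hw1, one_mul]

lemma exposed_set_eq {n : ℕ} (W : Finset (Spc n)) (ℓ : Spc n →L[ℝ] ℝ) (Mx : ℝ)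
    (hle : ∀ v ∈ W, ℓ v ≤ Mx) (hne : (W.filter (fun v => ℓ v = Mx)).Nonempty) :
    {x ∈ convexHull ℝ (W : Set (Spc n)) |
        ∀ y ∈ convexHull ℝ (W : Set (Spc n)), ℓ y ≤ ℓ x}
      = convexHull ℝ ((W.filter (fun v => ℓ v = Mx) : Finset (Spc n)) : Set (Spc n)) := by
  classical
  set S := W.filter (fun v => ℓ v = Mx) with hS
  have hSW : (S : Set (Spc n)) ⊆ (W : Set (Spc n)) := by
    intro v hv
    exact Finset.mem_coe.2 (Finset.filter_subset _ _ (Finset.mem_coe.1 hv))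
  have hSval : ∀ v ∈ S, ℓ v = Mx := fun v hv => (Finset.mem_filter.1 hv).2
  have hShull : ∀ x ∈ convexHull ℝ (S : Set (Spc n)), ℓ x = Mx := hull_eq_of_eq ℓ hSval
  have hWle := hull_le ℓ hle
  apply Set.Subset.antisymm
  · rintro x ⟨hxP, hxmax⟩
    obtain ⟨s0, hs0⟩ := hne
    have hs0P : s0 ∈ convexHull ℝ (W : Set (Spc n)) :=
      subset_convexHull ℝ _ (Finset.mem_coe.2 (Finset.filter_subset _ _ hs0))
    have hxM : ℓ x = Mx := by
      have h1 := hxmax s0 hs0P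
      have h2 := hWle x hxP
      have h3 := hSval s0 hs0
      linarith
    obtain ⟨w, hw0, hw1, hwx⟩ := rep_of_mem_hull hxP
    have hsum0 : ∑ v ∈ W, w v * (Mx - ℓ v) = 0 := by
      have : ∀ v ∈ W, w v * (Mx - ℓ v) = w v * Mx - w v * ℓ v := fun v _ => by ring
      rw [Finset.sum_congr rfl this, Finset.sum_sub_distrib, ← Finset.sum_mul, hw1, one_mul]
      have : ∑ v ∈ W, w v * ℓ v = ℓ x := by rw [← hwx, lmap_rep]
      rw [this, hxM, sub_self]
    have hz : ∀ v ∈ W, v ∉ S → w v = 0 := by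
      intro v hv hvS
      have hvne : ℓ v ≠ Mx := fun hh => hvS (Finset.mem_filter.2 ⟨hv, hh⟩)
      have hnn : ∀ v ∈ W, 0 ≤ w v * (Mx - ℓ v) := by
        intro v' hv'
        exact mul_nonneg (hw0 v' hv') (by linarith [hle v' hv'])
      have := (Finset.sum_eq_zero_iff_of_nonneg hnn).1 hsum0 v hv
      rcases mul_eq_zero.1 this with h | h
      · exact h
      · exact absurd (by linarith : ℓ v = Mx) hvne
    refine mem_hull_of_rep w (fun y hy => hw0 y (Finset.filter_subset _ _ hy)) ?_ ?_
    · rw [Finset.sum_subset (Finset.filter_subset _ _) hz]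
      exact hw1
    · rw [Finset.sum_subset (Finset.filter_subset _ _)
        (fun a ha ha2 => by rw [hz a ha ha2, zero_smul])]
      exact hwx
  · intro x hx
    refine ⟨convexHull_mono hSW hx, fun y hy => ?_⟩
    rw [hShull x hx]
    exact hWle y hy

/-- supporting functional for a face of the join complex -/
lemma face_functional {d c : ℕ} (hc : c < d) {α β : Finset (Spc (d + 1))}
    (hα : α ⊆ SA d c) (hαne : α ≠ SA d c) (hβ : β ⊆ SB d c) (hβne : β ≠ SB d c) :
    ∃ ℓ : Spc (d + 1) →L[ℝ] ℝ, (∀ v ∈ SA d c ∪ SB d c, ℓ v ≤ 1) ∧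
      (∀ v ∈ SA d c ∪ SB d c, (ℓ v = 1 ↔ v ∈ α ∪ β)) := by
  classical
  set rA : ℝ := -(α.card : ℝ) / ((SA d c \ α).card : ℝ) with hrAdef
  set rB : ℝ := -(β.card : ℝ) / ((SB d c \ β).card : ℝ) with hrBdef
  have hrA0 : rA ≤ 0 := by
    rw [hrAdef]
    apply div_nonpos_of_nonpos_of_nonneg
    · simp
    · exact Nat.cast_nonneg _
  have hrB0 : rB ≤ 0 := by
    rw [hrBdef]
    apply div_nonpos_of_nonpos_of_nonneg
    · simp
    · exact Nat.cast_nonneg _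
  set valA : Spc (d + 1) → ℝ := fun v => if v ∈ α then 1 else rA with hvalA
  set valB : Spc (d + 1) → ℝ := fun v => if v ∈ β then 1 else rB with hvalB
  have hsumA : ∑ v ∈ SA d c, valA v = 0 := by
    obtain ⟨x0, hx0S, hx0⟩ := exists_missing hα hαne
    have hcard : (SA d c \ α).card ≠ 0 :=
      Finset.card_ne_zero_of_mem (Finset.mem_sdiff.2 ⟨hx0S, hx0⟩)
    rw [← Finset.sum_filter_add_sum_filter_not (SA d c) (fun v => v ∈ α) valA]
    have e1 : (SA d c).filter (fun v => v ∈ α) = α :=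
      (Finset.filter_mem_eq_inter).trans (Finset.inter_eq_right.2 hα)
    have e2 : (SA d c).filter (fun v => v ∉ α) = SA d c \ α := (Finset.sdiff_eq_filter _ _).symm
    rw [e1, e2]
    have e3 : ∑ v ∈ α, valA v = (α.card : ℝ) := by
      have h' : ∀ v ∈ α, valA v = 1 := fun v hv => if_pos hv
      rw [Finset.sum_congr rfl h', Finset.sum_const, nsmul_eq_mul, mul_one]
    have e4 : ∑ v ∈ SA d c \ α, valA v = ((SA d c \ α).card : ℝ) * rA := by
      have h' : ∀ v ∈ SA d c \ α, valA v = rA :=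
        fun v hv => if_neg (Finset.mem_sdiff.1 hv).2
      rw [Finset.sum_congr rfl h', Finset.sum_const, nsmul_eq_mul]
    rw [e3, e4, hrAdef, mul_div_cancel₀ _ (Nat.cast_ne_zero.2 hcard)]
    ring
  have hsumB : ∑ v ∈ SB d c, valB v = 0 := by
    obtain ⟨y0, hy0S, hy0⟩ := exists_missing hβ hβne
    have hcard : (SB d c \ β).card ≠ 0 :=
      Finset.card_ne_zero_of_mem (Finset.mem_sdiff.2 ⟨hy0S, hy0⟩)
    rw [← Finset.sum_filter_add_sum_filter_not (SB d c) (fun v => v ∈ β) valB]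
    have e1 : (SB d c).filter (fun v => v ∈ β) = β :=
      (Finset.filter_mem_eq_inter).trans (Finset.inter_eq_right.2 hβ)
    have e2 : (SB d c).filter (fun v => v ∉ β) = SB d c \ β := (Finset.sdiff_eq_filter _ _).symm
    rw [e1, e2]
    have e3 : ∑ v ∈ β, valB v = (β.card : ℝ) := by
      have h' : ∀ v ∈ β, valB v = 1 := fun v hv => if_pos hv
      rw [Finset.sum_congr rfl h', Finset.sum_const, nsmul_eq_mul, mul_one]
    have e4 : ∑ v ∈ SB d c \ β, valB v = ((SB d c \ β).card : ℝ) * rB := by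
      have h' : ∀ v ∈ SB d c \ β, valB v = rB :=
        fun v hv => if_neg (Finset.mem_sdiff.1 hv).2
      rw [Finset.sum_congr rfl h', Finset.sum_const, nsmul_eq_mul]
    rw [e3, e4, hrBdef, mul_div_cancel₀ _ (Nat.cast_ne_zero.2 hcard)]
    ring
  set g : Fin (d + 1) → ℝ := fun k => if (k : ℕ) ≤ c then valA (ev k) else valB (ev k) with hg
  have hvalSA : ∀ v ∈ SA d c, clmap g v = valA v := by
    intro v hv
    rcases mem_SA.1 hv with rfl | ⟨k, hk, rfl⟩
    · rw [clmap_fA]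
      have e1 : ∑ k ∈ IA d c, g k = ∑ v ∈ (IA d c).image ev, valA v := by
        rw [Finset.sum_image (fun a _ b _ h => ev_inj h)]
        exact Finset.sum_congr rfl (fun k hk => if_pos (mem_IA.1 hk))
      have e2 : (IA d c).image ev = (SA d c).erase (fA d c) := by
        rw [SA, Finset.erase_insert fA_not_mem_image]
      have e3 : valA (fA d c) + ∑ v ∈ (SA d c).erase (fA d c), valA v = 0 := by
        rw [Finset.add_sum_erase _ valA fA_mem_SA]
        exact hsumA
      rw [e1, e2]
      linarith
    · rw [clmap_ev, hg]
      exact if_pos hk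
  have hvalSB : ∀ v ∈ SB d c, clmap g v = valB v := by
    intro v hv
    rcases mem_SB.1 hv with rfl | ⟨k, hk, rfl⟩
    · rw [clmap_fB]
      have e1 : ∑ k ∈ IB d c, g k = ∑ v ∈ (IB d c).image ev, valB v := by
        rw [Finset.sum_image (fun a _ b _ h => ev_inj h)]
        exact Finset.sum_congr rfl (fun k hk =>
          if_neg (by have := mem_IB.1 hk; omega))
      have e2 : (IB d c).image ev = (SB d c).erase (fB d c) := by
        rw [SB, Finset.erase_insert fB_not_mem_image]
      have e3 : valB (fB d c) + ∑ v ∈ (SB d c).erase (fB d c), valB v = 0 := by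
        rw [Finset.add_sum_erase _ valB fB_mem_SB]
        exact hsumB
      rw [e1, e2]
      linarith
    · rw [clmap_ev, hg]
      exact if_neg (by omega)
  refine ⟨clmap g, ?_, ?_⟩
  · intro v hv
    rcases Finset.mem_union.1 hv with hv | hv
    · rw [hvalSA v hv]
      show (if v ∈ α then (1:ℝ) else rA) ≤ 1
      split_ifs
      · exact le_refl 1
      · linarith
    · rw [hvalSB v hv]
      show (if v ∈ β then (1:ℝ) else rB) ≤ 1
      split_ifs
      · exact le_refl 1
      · linarith
  · intro v hv
    rcases Finset.mem_union.1 hv with hv | hv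
    · rw [hvalSA v hv]
      show (if v ∈ α then (1:ℝ) else rA) = 1 ↔ v ∈ α ∪ β
      constructor
      · intro h1
        by_cases hvα : v ∈ α
        · exact Finset.mem_union_left _ hvα
        · rw [if_neg hvα] at h1; linarith
      · intro h1
        rcases Finset.mem_union.1 h1 with h1 | h1
        · exact if_pos h1
        · exact absurd (hβ h1) (Finset.disjoint_left.1 disj_SASB hv)
    · rw [hvalSB v hv]
      show (if v ∈ β then (1:ℝ) else rB) = 1 ↔ v ∈ α ∪ β
      constructor
      · intro h1
        by_cases hvβ : v ∈ β
        · exact Finset.mem_union_right _ hvβ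
        · rw [if_neg hvβ] at h1; linarith
      · intro h1
        rcases Finset.mem_union.1 h1 with h1 | h1
        · exact absurd (hα h1) (Finset.disjoint_right.1 disj_SASB hv)
        · exact if_pos h1

lemma face_exposed {d c : ℕ} (hc : c < d) {t : Finset (Spc (d + 1))} (ht : t ∈ JF d c) :
    IsExposed ℝ (convexHull ℝ ((SA d c ∪ SB d c : Finset (Spc (d + 1))) : Set (Spc (d + 1))))
        (convexHull ℝ (t : Set (Spc (d + 1)))) ∧
      convexHull ℝ (t : Set (Spc (d + 1))) ≠
        convexHull ℝ ((SA d c ∪ SB d c : Finset (Spc (d + 1))) : Set (Spc (d + 1))) := by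
  classical
  obtain ⟨htne, α, β, hα, hαne, hβ, hβne, rfl⟩ := ht
  obtain ⟨ℓ, hle, hiff⟩ := face_functional hc hα hαne hβ hβne
  have hfilter : (SA d c ∪ SB d c).filter (fun v => ℓ v = 1) = α ∪ β := by
    ext v
    rw [Finset.mem_filter]
    constructor
    · rintro ⟨hv, hv1⟩
      exact (hiff v hv).1 hv1
    · intro hv
      have hvW : v ∈ SA d c ∪ SB d c := Finset.union_subset_union hα hβ hv
      exact ⟨hvW, (hiff v hvW).2 hv⟩
  have hne : ((SA d c ∪ SB d c).filter (fun v => ℓ v = 1)).Nonempty := by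
    rw [hfilter]
    exact Finset.nonempty_iff_ne_empty.2 htne
  have heq := exposed_set_eq (SA d c ∪ SB d c) ℓ 1 hle hne
  rw [hfilter] at heq
  constructor
  · intro _
    exact ⟨ℓ, heq.symm⟩
  · intro hcon
    obtain ⟨x0, hx0S, hx0⟩ := exists_missing hα hαne
    have hx0W : x0 ∈ SA d c ∪ SB d c := Finset.mem_union_left _ hx0S
    have hx0hull : x0 ∈ convexHull ℝ ((α ∪ β : Finset (Spc (d + 1))) : Set (Spc (d + 1))) := by
      rw [hcon]
      exact subset_convexHull ℝ _ (Finset.mem_coe.2 hx0W)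
    have hval1 : ∀ v ∈ α ∪ β, ℓ v = 1 := by
      intro v hv
      exact (hiff v (Finset.union_subset_union hα hβ hv)).2 hv
    have := hull_eq_of_eq ℓ hval1 x0 hx0hull
    have hx0ne : x0 ∉ α ∪ β := by
      intro hh
      rcases Finset.mem_union.1 hh with hh | hh
      · exact hx0 hh
      · exact (Finset.disjoint_left.1 disj_SASB hx0S) (hβ hh)
    exact hx0ne ((hiff x0 hx0W).1 this)

lemma exposed_classify {d c : ℕ} (hc : c < d) (F : Set (Spc (d + 1))) (hFne : F.Nonempty)
    (hexp : IsExposed ℝ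
      (convexHull ℝ ((SA d c ∪ SB d c : Finset (Spc (d + 1))) : Set (Spc (d + 1)))) F)
    (hFP : F ≠ convexHull ℝ ((SA d c ∪ SB d c : Finset (Spc (d + 1))) : Set (Spc (d + 1)))) :
    ∃ s ∈ JF d c, F = convexHull ℝ (s : Set (Spc (d + 1))) := by
  classical
  obtain ⟨ℓ, hF⟩ := hexp hFne
  have hWne : (SA d c ∪ SB d c).Nonempty := ⟨fA d c, Finset.mem_union_left _ fA_mem_SA⟩
  obtain ⟨v0, hv0W, hv0max⟩ := Finset.exists_max_image (SA d c ∪ SB d c) (fun v => ℓ v) hWne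
  set Mx : ℝ := ℓ v0 with hMx
  set S : Finset (Spc (d + 1)) := (SA d c ∪ SB d c).filter (fun v => ℓ v = Mx) with hSdef
  have hSne : S.Nonempty := ⟨v0, Finset.mem_filter.2 ⟨hv0W, rfl⟩⟩
  have heq := exposed_set_eq (SA d c ∪ SB d c) ℓ Mx hv0max hSne
  rw [← hSdef] at heq
  have hFS : F = convexHull ℝ (S : Set (Spc (d + 1))) := hF.trans heq
  -- S is a proper "join" subset
  have hSW : S ⊆ SA d c ∪ SB d c := Finset.filter_subset _ _
  have hnotSA : ¬ SA d c ⊆ S := by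
    intro hcon
    have hMx0 : Mx = 0 := by
      have h1 : ∀ v ∈ SA d c, ℓ v = Mx := fun v hv => (Finset.mem_filter.1 (hcon hv)).2
      have h2 : ∑ v ∈ SA d c, ℓ v = ℓ (∑ v ∈ SA d c, v) := (map_sum ℓ _ _).symm
      rw [sum_SA, map_zero] at h2
      rw [Finset.sum_congr rfl h1, Finset.sum_const, nsmul_eq_mul] at h2
      have hcard : ((SA d c).card : ℝ) ≠ 0 := by
        rw [SA_card (le_of_lt hc)]
        positivity
      exact (mul_eq_zero.1 h2).resolve_left hcard
    have hSB : SB d c ⊆ S := by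
      intro v hv
      have h2 : ∑ v ∈ SB d c, ℓ v = ℓ (∑ v ∈ SB d c, v) := (map_sum ℓ _ _).symm
      rw [sum_SB, map_zero] at h2
      have hnp : ∀ v ∈ SB d c, ℓ v ≤ 0 := by
        intro v' hv'
        have := hv0max v' (Finset.mem_union_right _ hv')
        rw [hMx0] at this
        exact this
      have := (Finset.sum_eq_zero_iff_of_nonpos hnp).1 h2 v hv
      exact Finset.mem_filter.2 ⟨Finset.mem_union_right _ hv, by rw [this, hMx0]⟩
    have hSeq : S = SA d c ∪ SB d c :=
      Finset.Subset.antisymm hSW (Finset.union_subset hcon hSB)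
    rw [hSeq] at hFS
    exact hFP hFS
  have hnotSB : ¬ SB d c ⊆ S := by
    intro hcon
    have hMx0 : Mx = 0 := by
      have h1 : ∀ v ∈ SB d c, ℓ v = Mx := fun v hv => (Finset.mem_filter.1 (hcon hv)).2
      have h2 : ∑ v ∈ SB d c, ℓ v = ℓ (∑ v ∈ SB d c, v) := (map_sum ℓ _ _).symm
      rw [sum_SB, map_zero] at h2
      rw [Finset.sum_congr rfl h1, Finset.sum_const, nsmul_eq_mul] at h2
      have hcard : ((SB d c).card : ℝ) ≠ 0 := by
        rw [SB_card (le_of_lt hc)]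
        positivity
      exact (mul_eq_zero.1 h2).resolve_left hcard
    have hSA : SA d c ⊆ S := by
      intro v hv
      have h2 : ∑ v ∈ SA d c, ℓ v = ℓ (∑ v ∈ SA d c, v) := (map_sum ℓ _ _).symm
      rw [sum_SA, map_zero] at h2
      have hnp : ∀ v ∈ SA d c, ℓ v ≤ 0 := by
        intro v' hv'
        have := hv0max v' (Finset.mem_union_left _ hv')
        rw [hMx0] at this
        exact this
      have := (Finset.sum_eq_zero_iff_of_nonpos hnp).1 h2 v hv
      exact Finset.mem_filter.2 ⟨Finset.mem_union_left _ hv, by rw [this, hMx0]⟩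
    exact hnotSA hSA
  refine ⟨S, ⟨?_, SA d c ∩ S, SB d c ∩ S, Finset.inter_subset_left, ?_, Finset.inter_subset_left,
    ?_, ?_⟩, hFS⟩
  · exact Finset.nonempty_iff_ne_empty.1 hSne
  · intro h
    exact hnotSA (Finset.inter_eq_left.1 h)
  · intro h
    exact hnotSB (Finset.inter_eq_left.1 h)
  · rw [← Finset.union_inter_distrib_right, Finset.inter_eq_right.2 hSW]

lemma span_top {d c : ℕ} (hc : c < d) :
    affineSpan ℝ ((SA d c ∪ SB d c : Finset (Spc (d + 1))) : Set (Spc (d + 1))) = ⊤ := by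
  classical
  have h0SA : (0 : Spc (d + 1)) ∈ convexHull ℝ ((SA d c : Finset (Spc (d+1))) : Set (Spc (d+1))) := by
    refine mem_hull_of_rep (fun _ => 1 / ((SA d c).card : ℝ)) (fun y _ => by positivity) ?_ ?_
    · rw [Finset.sum_const, nsmul_eq_mul, SA_card (le_of_lt hc)]
      rw [mul_one_div, div_self (by positivity)]
    · rw [← Finset.smul_sum, sum_SA, smul_zero]
  have h0 : (0 : Spc (d + 1)) ∈ affineSpan ℝ
      ((SA d c ∪ SB d c : Finset (Spc (d + 1))) : Set (Spc (d + 1))) := by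
    apply convexHull_subset_affineSpan
    exact convexHull_mono (by rw [Finset.coe_union]; exact Set.subset_union_left) h0SA
  have hev : ∀ k : Fin (d + 1), ev k ∈ affineSpan ℝ
      ((SA d c ∪ SB d c : Finset (Spc (d + 1))) : Set (Spc (d + 1))) := by
    intro k
    apply subset_affineSpan
    by_cases hk : (k : ℕ) ≤ c
    · exact Finset.mem_coe.2 (Finset.mem_union_left _ (mem_SA.2 (Or.inr ⟨k, hk, rfl⟩)))
    · exact Finset.mem_coe.2 (Finset.mem_union_right _ (mem_SB.2 (Or.inr ⟨k, by omega, rfl⟩)))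
  have hdir : (affineSpan ℝ
      ((SA d c ∪ SB d c : Finset (Spc (d + 1))) : Set (Spc (d + 1)))).direction = ⊤ := by
    rw [Submodule.eq_top_iff']
    intro x
    have hx : x = ∑ k, x k • ev k := by
      funext j
      rw [Finset.sum_apply]
      have : ∀ k, (x k • ev k) j = if j = k then x k else 0 := by
        intro k
        show x k * (if j = k then 1 else 0) = if j = k then x k else 0
        split_ifs <;> simp
      rw [Finset.sum_congr rfl (fun k _ => this k), Finset.sum_ite_eq Finset.univ j x,
        if_pos (Finset.mem_univ j)]
    rw [hx]
    apply Submodule.sum_mem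
    intro k _
    apply Submodule.smul_mem
    have := AffineSubspace.vsub_mem_direction (hev k) h0
    rwa [vsub_eq_sub, sub_zero] at this
  have hnonempty : (affineSpan ℝ
      ((SA d c ∪ SB d c : Finset (Spc (d + 1))) : Set (Spc (d + 1))) : Set (Spc (d+1))).Nonempty :=
    ⟨0, h0⟩
  exact (AffineSubspace.direction_eq_top_iff_of_nonempty hnonempty).1 hdir


lemma iso_to_LC {N d c : ℕ} (hc : c < d) (M : SimplicialComplex ℝ (Spc N))
    (s₁ s₂ : Finset (Spc N)) (hdisj : Disjoint s₁ s₂)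
    (h1 : s₁.card = c + 2) (h2 : s₂.card = d - c + 1)
    (hfaces : M.faces = {t | t ≠ ∅ ∧ ∃ α β : Finset (Spc N),
      α ⊆ s₁ ∧ α ≠ s₁ ∧ β ⊆ s₂ ∧ β ≠ s₂ ∧ t = α ∪ β}) :
    IsIso M (LC d c hc) := by
  classical
  have hcA : s₁.card = (SA d c).card := by rw [h1, SA_card hc.le]
  have hcB : s₂.card = (SB d c).card := by rw [h2, SB_card hc.le]
  set g₁ := Finset.equivOfCardEq hcA with hg₁
  set g₂ := Finset.equivOfCardEq hcB with hg₂
  set f : Spc N → Spc (d + 1) := fun x =>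
    if h : x ∈ s₁ then (g₁ ⟨x, h⟩ : Spc (d + 1))
    else if h : x ∈ s₂ then (g₂ ⟨x, h⟩ : Spc (d + 1)) else 0 with hf
  have hf1 : ∀ (x) (h : x ∈ s₁), f x = ↑(g₁ ⟨x, h⟩) := by
    intro x h; rw [hf]; exact dif_pos h
  have hf2 : ∀ (x) (h : x ∈ s₂), f x = ↑(g₂ ⟨x, h⟩) := by
    intro x h
    rw [hf]
    dsimp only
    rw [dif_neg (Finset.disjoint_right.1 hdisj h), dif_pos h]
  have hfm1 : ∀ x ∈ s₁, f x ∈ SA d c := fun x h => by rw [hf1 x h]; exact (g₁ ⟨x, h⟩).2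
  have hfm2 : ∀ x ∈ s₂, f x ∈ SB d c := fun x h => by rw [hf2 x h]; exact (g₂ ⟨x, h⟩).2
  have hinj : Set.InjOn f ↑(s₁ ∪ s₂) := by
    intro x hx y hy hxy
    rw [Finset.mem_coe, Finset.mem_union] at hx hy
    rcases hx with hx | hx <;> rcases hy with hy | hy
    · rw [hf1 x hx, hf1 y hy] at hxy
      have := g₁.injective (Subtype.coe_injective hxy)
      exact congrArg Subtype.val this
    · exact absurd (hfm2 y hy)
        (Finset.disjoint_left.1 disj_SASB (hxy ▸ hfm1 x hx))
    · exact absurd (hfm1 y hy)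
        (Finset.disjoint_right.1 disj_SASB (hxy ▸ hfm2 x hx))
    · rw [hf2 x hx, hf2 y hy] at hxy
      have := g₂.injective (Subtype.coe_injective hxy)
      exact congrArg Subtype.val this
  have hvsub : M.vertices ⊆ ↑(s₁ ∪ s₂) := by
    intro x hx
    have hx' : {x} ∈ M.faces := hx
    rw [hfaces] at hx'
    obtain ⟨-, α, β, hα, -, hβ, -, heq⟩ := hx'
    have : x ∈ α ∪ β := by rw [← heq]; exact Finset.mem_singleton_self x
    rcases Finset.mem_union.1 this with h | h
    · exact Finset.mem_coe.2 (Finset.mem_union_left _ (hα h))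
    · exact Finset.mem_coe.2 (Finset.mem_union_right _ (hβ h))
  -- preimage construction
  have hpre1 : ∀ (z : Spc (d + 1)) (hz : z ∈ SA d c), f ↑(g₁.symm ⟨z, hz⟩) = z := by
    intro z hz
    have hmem : ↑(g₁.symm ⟨z, hz⟩) ∈ s₁ := (g₁.symm ⟨z, hz⟩).2
    rw [hf1 _ hmem]
    have he : (⟨↑(g₁.symm ⟨z, hz⟩), hmem⟩ : {u // u ∈ s₁}) = g₁.symm ⟨z, hz⟩ :=
      Subtype.ext rfl
    rw [he, Equiv.apply_symm_apply]
  have hpre2 : ∀ (z : Spc (d + 1)) (hz : z ∈ SB d c), f ↑(g₂.symm ⟨z, hz⟩) = z := by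
    intro z hz
    have hmem : ↑(g₂.symm ⟨z, hz⟩) ∈ s₂ := (g₂.symm ⟨z, hz⟩).2
    rw [hf2 _ hmem]
    have he : (⟨↑(g₂.symm ⟨z, hz⟩), hmem⟩ : {u // u ∈ s₂}) = g₂.symm ⟨z, hz⟩ :=
      Subtype.ext rfl
    rw [he, Equiv.apply_symm_apply]
  refine ⟨f, Set.InjOn.mono hvsub hinj, ?_, ?_⟩
  · -- faces map into JF
    intro s hs
    rw [hfaces] at hs
    obtain ⟨hne, α, β, hα, hαne, hβ, hβne, rfl⟩ := hs
    show (α ∪ β).image f ∈ JF d c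
    have hαlt : (α.image f).card < (SA d c).card :=
      lt_of_le_of_lt Finset.card_image_le
        (hcA ▸ Finset.card_lt_card (Finset.ssubset_iff_subset_ne.2 ⟨hα, hαne⟩))
    have hβlt : (β.image f).card < (SB d c).card :=
      lt_of_le_of_lt Finset.card_image_le
        (hcB ▸ Finset.card_lt_card (Finset.ssubset_iff_subset_ne.2 ⟨hβ, hβne⟩))
    refine ⟨?_, α.image f, β.image f, ?_, ?_, ?_, ?_, Finset.image_union _ _⟩
    · intro h
      apply hne
      rwa [Finset.image_eq_empty] at h
    · intro z hz
      obtain ⟨x, hx, rfl⟩ := Finset.mem_image.1 hz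
      exact hfm1 x (hα hx)
    · exact fun h => absurd (congrArg Finset.card h) (Nat.ne_of_lt hαlt)
    · intro z hz
      obtain ⟨x, hx, rfl⟩ := Finset.mem_image.1 hz
      exact hfm2 x (hβ hx)
    · exact fun h => absurd (congrArg Finset.card h) (Nat.ne_of_lt hβlt)
  · -- surjectivity onto JF
    intro t ht
    have ht' : t ∈ JF d c := ht
    obtain ⟨htne, α', β', hα', hα'ne, hβ', hβ'ne, rfl⟩ := ht'
    set αpre : Finset (Spc N) :=
      α'.attach.image (fun y : {u // u ∈ α'} => (↑(g₁.symm ⟨↑y, hα' y.2⟩) : Spc N)) with hαpre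
    set βpre : Finset (Spc N) :=
      β'.attach.image (fun y : {u // u ∈ β'} => (↑(g₂.symm ⟨↑y, hβ' y.2⟩) : Spc N)) with hβpre
    have himg1 : αpre.image f = α' := by
      rw [hαpre, Finset.image_image]
      have : ∀ y ∈ α'.attach,
          (f ∘ fun y : {u // u ∈ α'} => (↑(g₁.symm ⟨↑y, hα' y.2⟩) : Spc N)) y = ↑y :=
        fun y _ => hpre1 ↑y (hα' y.2)
      rw [Finset.image_congr this, Finset.attach_image_val]
    have himg2 : βpre.image f = β' := by
      rw [hβpre, Finset.image_image]
      have : ∀ y ∈ β'.attach,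
          (f ∘ fun y : {u // u ∈ β'} => (↑(g₂.symm ⟨↑y, hβ' y.2⟩) : Spc N)) y = ↑y :=
        fun y _ => hpre2 ↑y (hβ' y.2)
      rw [Finset.image_congr this, Finset.attach_image_val]
    have hcard1 : αpre.card = α'.card := by
      apply le_antisymm
      · calc αpre.card ≤ α'.attach.card := Finset.card_image_le
          _ = α'.card := Finset.card_attach
      · calc α'.card = (αpre.image f).card := by rw [himg1]
          _ ≤ αpre.card := Finset.card_image_le
    have hcard2 : βpre.card = β'.card := by
      apply le_antisymm
      · calc βpre.card ≤ β'.attach.card := Finset.card_image_le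
          _ = β'.card := Finset.card_attach
      · calc β'.card = (βpre.image f).card := by rw [himg2]
          _ ≤ βpre.card := Finset.card_image_le
    have hsub1 : αpre ⊆ s₁ := by
      intro x hx
      rw [hαpre] at hx
      obtain ⟨y, -, rfl⟩ := Finset.mem_image.1 hx
      exact (g₁.symm ⟨↑y, hα' y.2⟩).2
    have hsub2 : βpre ⊆ s₂ := by
      intro x hx
      rw [hβpre] at hx
      obtain ⟨y, -, rfl⟩ := Finset.mem_image.1 hx
      exact (g₂.symm ⟨↑y, hβ' y.2⟩).2
    refine ⟨αpre ∪ βpre, ?_, ?_⟩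
    · rw [hfaces]
      refine ⟨?_, αpre, βpre, hsub1, ?_, hsub2, ?_, rfl⟩
      · intro h
        obtain ⟨he1, he2⟩ := Finset.union_eq_empty.1 h
        apply htne
        have e1 : α' = ∅ := Finset.card_eq_zero.1 (by rw [← hcard1, he1, Finset.card_empty])
        have e2 : β' = ∅ := Finset.card_eq_zero.1 (by rw [← hcard2, he2, Finset.card_empty])
        rw [e1, e2, Finset.union_empty]
      · intro h
        have : αpre.card < s₁.card := by
          rw [hcard1, h1, ← SA_card hc.le]
          exact Finset.card_lt_card (Finset.ssubset_iff_subset_ne.2 ⟨hα', hα'ne⟩)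
        rw [h] at this
        omega
      · intro h
        have : βpre.card < s₂.card := by
          rw [hcard2, h2, ← SB_card hc.le]
          exact Finset.card_lt_card (Finset.ssubset_iff_subset_ne.2 ⟨hβ', hβ'ne⟩)
        rw [h] at this
        omega
    · rw [Finset.image_union, himg1, himg2]

lemma polytopal_of_join {N d c : ℕ} (hc : c < d) (M : SimplicialComplex ℝ (Spc N))
    (s₁ s₂ : Finset (Spc N)) (hdisj : Disjoint s₁ s₂)
    (h1 : s₁.card = c + 2) (h2 : s₂.card = d - c + 1)
    (hfaces : M.faces = {t | t ≠ ∅ ∧ ∃ α β : Finset (Spc N),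
      α ⊆ s₁ ∧ α ≠ s₁ ∧ β ⊆ s₂ ∧ β ≠ s₂ ∧ t = α ∪ β}) :
    IsPolytopalSphere d M := by
  refine ⟨SA d c ∪ SB d c, LC d c hc, span_top hc, ⟨?_, ?_⟩,
    iso_to_LC hc M s₁ s₂ hdisj h1 h2 hfaces⟩
  · intro s hs
    have hs' : s ∈ JF d c := hs
    refine ⟨?_, (face_exposed hc hs').1, (face_exposed hc hs').2⟩
    intro x hx
    exact Finset.mem_coe.2 (JF_subset hs' (Finset.mem_coe.1 hx))
  · intro F hF1 hF2 hF3
    obtain ⟨s, hs, hFs⟩ := exposed_classify hc F hF1 hF2 hF3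
    exact ⟨s, hs, hFs⟩

end Aux

/-- A `d`-pseudomanifold with `d+3` vertices is the join of two standard spheres
`S^c_{c+2} * S^{d-c-1}_{d-c+1}`, and in particular a polytopal sphere. -/
theorem pseudomanifold_d_plus_3_vertices
    {N d : ℕ} (hd : 1 ≤ d) (M : SimplicialComplex ℝ (Spc N))
    (hM : IsPseudomanifold d M) (hn : M.vertices.ncard = d + 3) :
    (∃ c : ℕ, c < d ∧ ∃ s₁ s₂ : Finset (Spc N), Disjoint s₁ s₂ ∧
      s₁.card = c + 2 ∧ s₂.card = d - c + 1 ∧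
      M.faces = {t | t ≠ ∅ ∧ ∃ α β : Finset (Spc N),
        α ⊆ s₁ ∧ α ≠ s₁ ∧ β ⊆ s₂ ∧ β ≠ s₂ ∧ t = α ∪ β}) ∧
    IsPolytopalSphere d M := by
  obtain ⟨hne, ⟨hdim, hpure⟩, hridge, -⟩ := hM
  obtain ⟨c, hc, s₁, s₂, hdisj, h1, h2, hfaces⟩ := part1 hd M hne hdim hpure hridge hn
  exact ⟨⟨c, hc, s₁, s₂, hdisj, h1, h2, hfaces⟩,
    polytopal_of_join hc M s₁ s₂ hdisj h1 h2 hfaces⟩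

end MinTri
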